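/- arXiv:math/9907076 — 3 statements merged into one kernel-verified Lean document; each statement's English description precedes it below -/
import Mathlib

section
/- If e_γ ≡_d e_τ for γ, τ ∈ Π_d, then e_γ↑ ≡_{d+1} e_τ↑; that is, the induction operation ↑ is well-defined on congruence classes of noncommutative elementary symmetric functions. -/
open Finset

attribute [local instance] Classical.propDecidable

/-- Homogeneous degree-`d` noncommutative symmetric functions, viewed as
coefficient functions on words of length `d` in the variables. -/
abbrev NCF (d : ℕ) := (Fin d → ℕ) → ℚ

/-- A coloring is proper for the edge family `ends` if the endpoints of every
edge receive distinct colors. -/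
def Proper {d : ℕ} {ε : Type*} {C : Type*} (ends : ε → Sym2 (Fin d)) (w : Fin d → C) : Prop :=
  ∀ (e : ε) (i j : Fin d), ends e = s(i, j) → w i ≠ w j

/-- The noncommutative chromatic symmetric function `Y_G`. -/
noncomputable def Y {d : ℕ} {ε : Type*} (ends : ε → Sym2 (Fin d)) : NCF d :=
  fun w => if Proper ends w then 1 else 0

/-- Noncommutative monomial symmetric function indexed by a set partition. -/
noncomputable def mFun {d : ℕ} (π : Setoid (Fin d)) : NCF d :=
  fun w => if (∀ i j, w i = w j ↔ π i j) then 1 else 0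

/-- Noncommutative power sum symmetric function indexed by a set partition. -/
noncomputable def pFun {d : ℕ} (π : Setoid (Fin d)) : NCF d :=
  fun w => if (∀ i j, π i j → w i = w j) then 1 else 0

/-- Noncommutative elementary symmetric function indexed by a set partition. -/
noncomputable def eFun {d : ℕ} (π : Setoid (Fin d)) : NCF d :=
  fun w => if (∀ i j, i ≠ j → π i j → w i ≠ w j) then 1 else 0

noncomputable instance setoidFintype (d : ℕ) : Fintype (Setoid (Fin d)) :=
  Fintype.ofInjective (fun s : Setoid (Fin d) => (s : Fin d → Fin d → Prop))
    (fun s t h => Setoid.ext fun a b => by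
      have := congrFun (congrFun h a) b; simpa using this.to_iff)

/-- Position action of a permutation on words/NCFs. -/
noncomputable def act {d : ℕ} (δ : Equiv.Perm (Fin d)) (f : NCF d) : NCF d :=
  fun w => f (w ∘ δ)

/-- The induction operator `↑`, repeating the last variable. -/
noncomputable def up {n : ℕ} (f : NCF (n + 1)) : NCF (n + 2) :=
  fun w => if w (Fin.last (n + 1)) = w ⟨n, by omega⟩ then f (fun i => w i.castSucc) else 0

/-- Vertex map collapsing the last vertex onto the next-to-last one (for contraction). -/
def collapse {n : ℕ} : Fin (n + 2) → Fin (n + 1) :=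
  fun i => if h : (i : ℕ) < n + 1 then ⟨i, h⟩ else ⟨n, by omega⟩

/-- The partition of `[d]` into connected components of the spanning subgraph with edge set `S`. -/
def components {d : ℕ} {ε : Type*} (ends : ε → Sym2 (Fin d)) (S : Finset ε) :
    Setoid (Fin d) :=
  Relation.EqvGen.setoid (fun i j => ∃ e ∈ S, ends e = s(i, j))

/-- The size of the block of `π` containing `i`. -/
noncomputable def blockCard {n : ℕ} (π : Setoid (Fin n)) (i : Fin n) : ℕ :=
  (Finset.univ.filter (fun j => π i j)).card

/-- The multiset of block sizes (the type `λ(π)`) of a set partition. -/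
noncomputable def sizes {n : ℕ} (π : Setoid (Fin n)) : Multiset ℕ :=
  (Finset.univ.image (fun i => Finset.univ.filter (fun j => π i j))).val.map Finset.card

/-- `σ ≡ᵢ τ` : same type and blocks containing `i` of equal size. -/
def cls {n : ℕ} (i : Fin n) (σ τ : Setoid (Fin n)) : Prop :=
  sizes σ = sizes τ ∧ blockCard σ i = blockCard τ i

/-- Congruence modulo `i` of noncommutative symmetric functions: the amalgamated
coefficients of their `e`-expansions agree on every `≡ᵢ`-class. -/
noncomputable def EquivI {n : ℕ} (i : Fin n) (F G : NCF n) : Prop :=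
  ∃ a b : Setoid (Fin n) → ℚ,
    F = ∑ τ : Setoid (Fin n), a τ • eFun τ ∧
    G = ∑ τ : Setoid (Fin n), b τ • eFun τ ∧
    ∀ τ, (∑ σ : Setoid (Fin n), if cls i σ τ then a σ else 0)
        = ∑ σ : Setoid (Fin n), if cls i σ τ then b σ else 0

/-- `(e)`-positivity with respect to the congruence modulo `i`. -/
noncomputable def EPos {n : ℕ} (i : Fin n) (F : NCF n) : Prop :=
  ∃ a : Setoid (Fin n) → ℚ,
    F = ∑ τ : Setoid (Fin n), a τ • eFun τ ∧
    ∀ τ, 0 ≤ ∑ σ : Setoid (Fin n), if cls i σ τ then a σ else 0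

/-- `(e)`-positivity of a labeled graph: for some labeling and some congruence. -/
noncomputable def EPosG {d : ℕ} {ε : Type*} (ends : ε → Sym2 (Fin d)) : Prop :=
  ∃ (δ : Equiv.Perm (Fin d)) (i : Fin d),
    EPos i (Y (fun e => (ends e).map δ))

/-- Extend a partition of `{0,…,n}` to one of `{0,…,n+m}`: old blocks are kept,
the new elements (indices `≥ n+1`) satisfying `Q` are merged into the block of
the old last element `n`, and the remaining new elements form singletons. -/
def extendB {n : ℕ} (m : ℕ) (π : Setoid (Fin (n + 1))) (Q : ℕ → Prop) :
    Setoid (Fin (n + 1 + m)) where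
  r x y := x = y ∨
    (∃ (hx : (x : ℕ) < n + 1) (hy : (y : ℕ) < n + 1), π ⟨x, hx⟩ ⟨y, hy⟩) ∨
    (((∃ hx : (x : ℕ) < n + 1, π ⟨x, hx⟩ (Fin.last n)) ∨ (n + 1 ≤ (x : ℕ) ∧ Q (x : ℕ))) ∧
     ((∃ hy : (y : ℕ) < n + 1, π ⟨y, hy⟩ (Fin.last n)) ∨ (n + 1 ≤ (y : ℕ) ∧ Q (y : ℕ))))
  iseqv := by
    constructor
    · intro x; exact Or.inl rfl
    · rintro x y (rfl | ⟨hx, hy, h⟩ | ⟨h1, h2⟩)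
      · exact Or.inl rfl
      · exact Or.inr (Or.inl ⟨hy, hx, π.symm h⟩)
      · exact Or.inr (Or.inr ⟨h2, h1⟩)
    · rintro x y z (rfl | ⟨hx, hy, h⟩ | ⟨h1, h2⟩) h'
      · exact h'
      · rcases h' with rfl | ⟨hy', hz, h''⟩ | ⟨h1', h2'⟩
        · exact Or.inr (Or.inl ⟨hx, hy, h⟩)
        · exact Or.inr (Or.inl ⟨hx, hz, π.trans h h''⟩)
        · rcases h1' with ⟨hy', hB⟩ | ⟨hge, _⟩
          · exact Or.inr (Or.inr ⟨Or.inl ⟨hx, π.trans h hB⟩, h2'⟩)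
          · omega
      · rcases h' with rfl | ⟨hy', hz, h''⟩ | ⟨h1', h2'⟩
        · exact Or.inr (Or.inr ⟨h1, h2⟩)
        · rcases h2 with ⟨hy2, hB⟩ | ⟨hge, _⟩
          · exact Or.inr (Or.inr ⟨h1, Or.inl ⟨hz, π.trans (π.trans (π.symm h'') hB) (π.refl _)⟩⟩)
          · omega
        · exact Or.inr (Or.inr ⟨h1, h2'⟩)

/-- `π + (n+1)` : insert the new element `n+1` into the block containing `n`. -/
def addLast {n : ℕ} (π : Setoid (Fin (n + 1))) : Setoid (Fin (n + 2)) :=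
  extendB 1 π (fun _ => True)

/-- `π / (n+1)` : add the new element `n+1` as a singleton block. -/
def addSingleton {n : ℕ} (π : Setoid (Fin (n + 1))) : Setoid (Fin (n + 2)) :=
  extendB 1 π (fun _ => False)

/-- `σ / (d+1),…,(d+m)` : add the new elements as one additional block. -/
def addBlock {d : ℕ} (m : ℕ) (σ : Setoid (Fin d)) : Setoid (Fin (d + m)) where
  r x y := (∃ (hx : (x : ℕ) < d) (hy : (y : ℕ) < d), σ ⟨x, hx⟩ ⟨y, hy⟩) ∨
    (d ≤ (x : ℕ) ∧ d ≤ (y : ℕ))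
  iseqv := by
    constructor
    · intro x
      by_cases h : (x : ℕ) < d
      · exact Or.inl ⟨h, h, σ.refl _⟩
      · exact Or.inr ⟨by omega, by omega⟩
    · rintro x y (⟨hx, hy, h⟩ | ⟨hx, hy⟩)
      · exact Or.inl ⟨hy, hx, σ.symm h⟩
      · exact Or.inr ⟨hy, hx⟩
    · rintro x y z (⟨hx, hy, h⟩ | ⟨hx, hy⟩) (⟨hy', hz, h'⟩ | ⟨hy', hz⟩)
      · exact Or.inl ⟨hx, hz, σ.trans h h'⟩
      · omega
      · omega
      · exact Or.inr ⟨hx, hz⟩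

noncomputable instance setoidLFO (d : ℕ) : LocallyFiniteOrder (Setoid (Fin d)) :=
  Fintype.toLocallyFiniteOrder

/-- The Möbius function of the lattice of set partitions, with values in `ℚ`. -/
noncomputable def muS {d : ℕ} (a b : Setoid (Fin d)) : ℚ :=
  IncidenceAlgebra.mu ℚ a b

/-- Falling factorial `⟨m⟩_i = m(m-1)⋯(m-i+1)` as a rational number. -/
def ffact (m i : ℕ) : ℚ := ∏ j ∈ Finset.range i, ((m : ℚ) - j)

/-- Rising factorial `(b)_i = b(b+1)⋯(b+i-1)` as a rational number. -/
def rfact (b i : ℕ) : ℚ := ∏ j ∈ Finset.range i, ((b : ℚ) + j)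

/-- The path `P_{n+1}` with edges `v_i v_{i+1}`. -/
def pathEnds (n : ℕ) : Fin n → Sym2 (Fin (n + 1)) :=
  fun e => s(e.castSucc, e.succ)

/-- The cycle `C_{n+1}` with edges `v_i v_{i+1}` (indices mod `n+1`). -/
def cycleEnds (n : ℕ) : Fin (n + 1) → Sym2 (Fin (n + 1)) :=
  fun i => s(i, i + 1)

/-- The commutative chromatic symmetric function `X_G` in `N` variables. -/
noncomputable def Xcomm {d : ℕ} {ε : Type*} (ends : ε → Sym2 (Fin d)) (N : ℕ) :
    MvPolynomial (Fin N) ℚ :=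
  ∑ κ : Fin d → Fin N, if Proper ends κ then ∏ i, MvPolynomial.X (κ i) else 0

section Orientations

variable {V : Type*} {ε : Type*}

/-- `o` is an orientation of the graph with edge endpoints `ends`. -/
def IsOrient (ends : ε → Sym2 V) (o : ε → V × V) : Prop :=
  ∀ e, s((o e).1, (o e).2) = ends e

/-- An orientation is acyclic when it admits no directed cycle. -/
def Acyclic (o : ε → V × V) : Prop :=
  ∀ v : V, ¬ Relation.TransGen (fun a b => ∃ e, o e = (a, b)) v v

/-- `v` is a sink: every edge incident to `v` is directed toward `v`. -/
def IsSink (o : ε → V × V) (v : V) : Prop := ∀ e, (o e).1 ≠ v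

/-- The set of acyclic orientations with unique sink `v₀`. -/
def Aset (ends : ε → Sym2 V) (v₀ : V) : Set (ε → V × V) :=
  {o | IsOrient ends o ∧ Acyclic o ∧ IsSink o v₀ ∧ ∀ v, IsSink o v → v = v₀}

end Orientations

/-- A circuit: a closed walk `u_0, u_1, …, u_m, u_0` with distinct vertices and
distinct edges. -/
structure Circuit {d : ℕ} {ε : Type*} (ends : ε → Sym2 (Fin d)) where
  m : ℕ
  v : Fin (m + 1) → Fin d
  f : Fin (m + 1) → ε
  hv : Function.Injective v
  hf : Function.Injective f
  he : ∀ k, ends (f k) = s(v k, v (k + 1))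

/-- The broken circuit obtained from a circuit: its edge set with the largest
edge removed. -/
noncomputable def broken {d : ℕ} {ε : Type*} [LinearOrder ε] {ends : ε → Sym2 (Fin d)}
    (C : Circuit ends) : Finset ε :=
  (Finset.univ.image C.f).erase
    ((Finset.univ.image C.f).max'
      ⟨C.f 0, Finset.mem_image_of_mem _ (Finset.mem_univ _)⟩)

/-- `P(α)`: partitions `τ ≤ π+(d+1)` whose blocks can be listed as `B_1,…,B_l`
with `|B_i| = α_i` and `d+1 ∈ B_1`. -/
def Pset {d : ℕ} (π : Setoid (Fin (d + 1))) (l : ℕ) (α : Fin l → ℕ) :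
    Set (Setoid (Fin (d + 2))) :=
  {τ | τ ≤ addLast π ∧ ∃ B : Fin l → Finset (Fin (d + 2)),
    (∀ x y, τ x y ↔ ∃ i, x ∈ B i ∧ y ∈ B i) ∧
    (∀ i j, i ≠ j → Disjoint (B i) (B j)) ∧
    (∀ i, (B i).card = α i) ∧
    ∃ hl : 0 < l, Fin.last (d + 1) ∈ B ⟨0, hl⟩}

/-- `G + K_{m+1}` : attach a complete graph on `{v_{d}, v_{d+1}, …, v_{d+m}}`
(`m` new vertices) to the last vertex of a graph `G` on `d+1` vertices. -/
def attachEnds {d : ℕ} {ε : Type*} (ends : ε → Sym2 (Fin (d + 1))) (m : ℕ) :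
    ε ⊕ {p : Fin (m + 1) × Fin (m + 1) // p.1 < p.2} → Sym2 (Fin (d + 1 + m))
  | Sum.inl e => (ends e).map (fun x : Fin (d + 1) => (⟨(x : ℕ), by omega⟩ : Fin (d + 1 + m)))
  | Sum.inr p => s(⟨d + (p.1.1 : ℕ), by omega⟩, ⟨d + (p.1.2 : ℕ), by omega⟩)

/-- The disjoint union `G ⊎ K_m`, with the clique on the `m` new vertices. -/
def disjEnds {d : ℕ} {ε : Type*} (ends : ε → Sym2 (Fin d)) (m : ℕ) :
    ε ⊕ {p : Fin m × Fin m // p.1 < p.2} → Sym2 (Fin (d + m))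
  | Sum.inl e => (ends e).map (Fin.castAdd m)
  | Sum.inr p => s(Fin.natAdd d p.1.1, Fin.natAdd d p.1.2)

section UpRespAux
namespace UpResp

variable {n : ℕ}

/-- kernel setoid of a word -/
def kerS (w : Fin n → ℕ) : Setoid (Fin n) :=
  ⟨fun i j => w i = w j, ⟨fun _ => rfl, Eq.symm, Eq.trans⟩⟩

@[simp] lemma kerS_rel (w : Fin n → ℕ) (i j : Fin n) : kerS w i j ↔ w i = w j := Iff.rfl

/-- cycle setoid of a permutation -/
def cycS (g : Equiv.Perm (Fin n)) : Setoid (Fin n) :=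
  ⟨g.SameCycle, Equiv.Perm.SameCycle.equivalence g⟩

@[simp] lemma cycS_rel (g : Equiv.Perm (Fin n)) (i j : Fin n) :
    cycS g i j ↔ g.SameCycle i j := Iff.rfl

lemma cycS_le_iff {g : Equiv.Perm (Fin n)} {ρ : Setoid (Fin n)} :
    cycS g ≤ ρ ↔ ∀ x, ρ x (g x) := by
  constructor
  · intro h x
    exact Setoid.le_def.mp h ⟨1, by simp⟩
  · intro h
    rw [Setoid.le_def]
    intro x y hxy
    obtain ⟨k, hk⟩ := hxy
    subst hk
    have hnat : ∀ (m : ℕ) (x : Fin n), ρ x ((g ^ m) x) := by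
      intro m
      induction m with
      | zero => intro x; simpa using ρ.refl x
      | succ m ih =>
        intro x
        have h1 : ρ ((g ^ m) x) (g ((g ^ m) x)) := h _
        have heq : (g ^ (m + 1)) x = g ((g ^ m) x) := by
          rw [pow_succ']; rfl
        rw [heq]
        exact ρ.trans (ih x) h1
    have hnatinv : ∀ (m : ℕ) (x : Fin n), ρ x ((g⁻¹ ^ m) x) := by
      intro m
      induction m with
      | zero => intro x; simpa using ρ.refl x
      | succ m ih =>
        intro x
        have h1 : ρ (g⁻¹ ((g⁻¹ ^ m) x)) ((g⁻¹ ^ m) x) := by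
          have := h (g⁻¹ ((g⁻¹ ^ m) x))
          simpa using this
        have heq : (g⁻¹ ^ (m + 1)) x = g⁻¹ ((g⁻¹ ^ m) x) := by
          rw [pow_succ']; rfl
        rw [heq]
        exact ρ.trans (ih x) (ρ.symm h1)
    rcases le_or_gt 0 k with hk0 | hk0
    · obtain ⟨m, rfl⟩ := Int.eq_ofNat_of_zero_le hk0
      rw [zpow_natCast]; exact hnat m x
    · obtain ⟨m, hm⟩ : ∃ m : ℕ, k = -(m : ℤ) := ⟨k.natAbs, by omega⟩
      subst hm
      rw [zpow_neg, zpow_natCast, ← inv_pow]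
      exact hnatinv m x

/-- The key determinant identity. -/
lemma det_setoid (ρ : Setoid (Fin n)) :
    (∑ g : Equiv.Perm (Fin n), if cycS g ≤ ρ then ((Equiv.Perm.sign g : ℤ) : ℚ) else 0)
      = if ρ = ⊥ then 1 else 0 := by
  classical
  set A : Matrix (Fin n) (Fin n) ℚ := fun x y => if ρ x y then 1 else 0 with hA
  have hdet : A.det = ∑ g : Equiv.Perm (Fin n),
      if cycS g ≤ ρ then ((Equiv.Perm.sign g : ℤ) : ℚ) else 0 := by
    rw [Matrix.det_apply]
    refine Finset.sum_congr rfl fun g _ => ?_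
    have hprod : (∏ i : Fin n, A (g i) i) = if cycS g ≤ ρ then (1 : ℚ) else 0 := by
      rw [cycS_le_iff]
      by_cases h : ∀ x, ρ x (g x)
      · rw [if_pos h]
        apply Finset.prod_eq_one
        intro i _
        have hr : ρ (g i) i := ρ.symm (h i)
        simp only [hA]
        simp [hr]
      · rw [if_neg h]
        push_neg at h
        obtain ⟨i, hi⟩ := h
        refine Finset.prod_eq_zero (Finset.mem_univ i) ?_
        have hr : ¬ ρ (g i) i := fun hc => hi (ρ.symm hc)
        simp only [hA]
        simp [hr]
    rw [hprod]
    by_cases h : cycS g ≤ ρ <;>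
      rcases Int.units_eq_one_or (Equiv.Perm.sign g) with h1 | h1 <;>
        simp [h, h1, Units.smul_def]
  rw [← hdet]
  by_cases hb : ρ = ⊥
  · subst hb
    have hbotrel : ∀ x y : Fin n, (⊥ : Setoid (Fin n)) x y ↔ x = y := by
      intro x y; rw [Setoid.bot_def]
    have : A = 1 := by
      funext x y
      simp only [hA, Matrix.one_apply, hbotrel]
    rw [this, Matrix.det_one, if_pos rfl]
  · rw [if_neg hb]
    have : ∃ i j : Fin n, i ≠ j ∧ ρ i j := by
      by_contra hc
      push_neg at hc
      apply hb
      apply le_antisymm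
      · rw [Setoid.le_def]
        intro x y hxy
        rcases eq_or_ne x y with rfl | hne
        · exact (⊥ : Setoid (Fin n)).refl x
        · exact absurd hxy (hc x y hne)
      · exact bot_le
    obtain ⟨i, j, hne, hij⟩ := this
    apply Matrix.det_zero_of_row_eq hne
    funext y
    simp only [hA]
    congr 1
    exact propext ⟨fun h => ρ.trans (ρ.symm hij) h, fun h => ρ.trans hij h⟩

end UpResp

section S2
-- continuation: assumes partS content above
namespace UpResp
variable {n : ℕ}

lemma eFun_eq_ind (σ : Setoid (Fin n)) (w : Fin n → ℕ) :
    eFun σ w = if σ ⊓ kerS w = ⊥ then 1 else 0 := by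
  unfold eFun
  congr 1
  apply propext
  constructor
  · intro h
    apply le_antisymm _ bot_le
    rw [Setoid.le_def]
    intro x y hxy
    rw [Setoid.inf_iff_and] at hxy
    rcases eq_or_ne x y with rfl | hne
    · exact (⊥ : Setoid (Fin n)).refl x
    · exact absurd hxy.2 (h x y hne hxy.1)
  · intro h i j hne hij hw
    have : (σ ⊓ kerS w) i j := Setoid.inf_iff_and.mpr ⟨hij, hw⟩
    rw [h] at this
    have hb : ∀ a b : Fin n, (⊥ : Setoid (Fin n)) a b ↔ a = b := fun a b => by
      rw [Setoid.bot_def]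
    exact hne ((hb i j).mp this)

lemma pFun_eq_ind (τ : Setoid (Fin n)) (w : Fin n → ℕ) :
    pFun τ w = if τ ≤ kerS w then 1 else 0 := by
  unfold pFun
  congr 1

lemma mFun_eq_ind (σ : Setoid (Fin n)) (w : Fin n → ℕ) :
    mFun σ w = if kerS w = σ then 1 else 0 := by
  unfold mFun
  congr 1
  apply propext
  constructor
  · intro h; exact Setoid.ext fun i j => h i j
  · intro h i j; rw [← h]; exact Iff.rfl

/-- e in terms of p over permutations. -/
lemma eFun_as_p (σ : Setoid (Fin n)) :
    eFun σ = ∑ g : Equiv.Perm (Fin n),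
      (if cycS g ≤ σ then ((Equiv.Perm.sign g : ℤ) : ℚ) else 0) • pFun (cycS g) := by
  funext w
  rw [Finset.sum_apply]
  have : ∀ g : Equiv.Perm (Fin n),
      ((if cycS g ≤ σ then ((Equiv.Perm.sign g : ℤ) : ℚ) else 0) • pFun (cycS g)) w
        = if cycS g ≤ σ ⊓ kerS w then ((Equiv.Perm.sign g : ℤ) : ℚ) else 0 := by
    intro g
    show (if cycS g ≤ σ then ((Equiv.Perm.sign g : ℤ) : ℚ) else 0) * pFun (cycS g) w = _
    rw [pFun_eq_ind, le_inf_iff]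
    by_cases h1 : cycS g ≤ σ <;> by_cases h2 : cycS g ≤ kerS w <;> simp [h1, h2]
  rw [Finset.sum_congr rfl (fun g _ => this g), det_setoid (σ ⊓ kerS w), eFun_eq_ind]

end UpResp
end S2

section S3
namespace UpResp
variable {n : ℕ}

lemma bot_rel_iff (a b : Fin n) : (⊥ : Setoid (Fin n)) a b ↔ a = b := by
  rw [Setoid.bot_def]

lemma cycS_one : cycS (1 : Equiv.Perm (Fin n)) = ⊥ := by
  apply Setoid.ext; intro a b
  rw [bot_rel_iff]
  exact Equiv.Perm.sameCycle_one

/-- Every setoid arises as the cycle setoid of some permutation. -/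
lemma exists_cycS (τ : Setoid (Fin n)) : ∃ g : Equiv.Perm (Fin n), cycS g = τ := by
  classical
  have key : ∀ (m : ℕ) (τ : Setoid (Fin n)),
      (Finset.univ.filter fun x => ∃ y, τ x y ∧ y ≠ x).card ≤ m →
      ∃ g : Equiv.Perm (Fin n), cycS g = τ := by
    intro m
    induction m with
    | zero =>
      intro τ hcard
      have hbot : τ = ⊥ := by
        apply le_antisymm _ bot_le
        rw [Setoid.le_def]
        intro x y hxy
        rw [bot_rel_iff]
        by_contra hne
        have hx : x ∈ Finset.univ.filter fun x => ∃ y, τ x y ∧ y ≠ x :=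
          Finset.mem_filter.mpr ⟨Finset.mem_univ _, ⟨y, hxy, fun h => hne h.symm⟩⟩
        have := Finset.card_pos.mpr ⟨x, hx⟩
        omega
      exact ⟨1, by rw [cycS_one, hbot]⟩
    | succ m ih =>
      intro τ hcard
      by_cases htriv : ∀ x y : Fin n, τ x y → x = y
      · have hbot : τ = ⊥ := by
          apply le_antisymm _ bot_le
          rw [Setoid.le_def]
          intro x y hxy
          rw [bot_rel_iff]
          exact htriv x y hxy
        exact ⟨1, by rw [cycS_one, hbot]⟩
      push_neg at htriv
      obtain ⟨x0, y0, hx0y0, hney⟩ := htriv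
      set C : Finset (Fin n) := Finset.univ.filter fun y => τ x0 y with hC
      have memC : ∀ a, a ∈ C ↔ τ x0 a := by
        intro a; simp [hC]
      -- split off the class C into singletons
      set τ' : Setoid (Fin n) :=
        ⟨fun a b => a = b ∨ (τ a b ∧ ¬ τ x0 a ∧ ¬ τ x0 b),
         ⟨fun a => Or.inl rfl,
          by rintro a b (rfl | ⟨h1, h2, h3⟩); · exact Or.inl rfl
             · exact Or.inr ⟨τ.symm h1, h3, h2⟩,
          by rintro a b c (rfl | ⟨h1, h2, h3⟩) hbc
             · exact hbc
             · rcases hbc with rfl | ⟨h4, h5, h6⟩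
               · exact Or.inr ⟨h1, h2, h3⟩
               · exact Or.inr ⟨τ.trans h1 h4, h2, h6⟩⟩⟩ with hτ'
      have hrel' : ∀ a b, τ' a b ↔ (a = b ∨ (τ a b ∧ ¬ τ x0 a ∧ ¬ τ x0 b)) := fun a b => Iff.rfl
      have hsub : (Finset.univ.filter fun x => ∃ y, τ' x y ∧ y ≠ x) ⊂
          (Finset.univ.filter fun x => ∃ y, τ x y ∧ y ≠ x) := by
        constructor
        · intro x hx
          rw [Finset.mem_filter] at hx ⊢
          obtain ⟨-, y, hy, hne⟩ := hx
          rcases (hrel' x y).mp hy with rfl | ⟨h1, h2, h3⟩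
          · exact absurd rfl hne
          · exact ⟨Finset.mem_univ _, y, h1, hne⟩
        · intro hsup
          have hx0 : x0 ∈ Finset.univ.filter fun x => ∃ y, τ x y ∧ y ≠ x :=
            Finset.mem_filter.mpr ⟨Finset.mem_univ _, ⟨y0, hx0y0, hney.symm⟩⟩
          have hx0' := hsup hx0
          rw [Finset.mem_filter] at hx0'
          obtain ⟨-, y, hy, hne⟩ := hx0'
          rcases (hrel' x0 y).mp hy with rfl | ⟨h1, h2, h3⟩
          · exact hne rfl
          · exact h2 (τ.refl x0)
      have hcard' : (Finset.univ.filter fun x => ∃ y, τ' x y ∧ y ≠ x).card ≤ m := by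
        have := Finset.card_lt_card hsub
        omega
      obtain ⟨g', hg'⟩ := ih τ' hcard'
      -- g' fixes C pointwise
      have hg'fix : ∀ a ∈ C, g' a = a := by
        intro a ha
        rw [memC] at ha
        have hsc : (cycS g') a (g' a) := ⟨1, by simp⟩
        rw [hg'] at hsc
        rcases (hrel' a (g' a)).mp hsc with h | ⟨h1, h2, h3⟩
        · exact h.symm
        · exact absurd ha h2
      have hg'C : ∀ a, a ∉ C → g' a ∉ C := by
        intro a ha hga
        have h1 : g' (g' a) = g' a := hg'fix _ hga
        have h2 : g' a = a := g'.injective h1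
        exact ha (h2 ▸ hga)
      obtain ⟨f, hf, hfsupp⟩ := Finset.exists_cycleOn C
      have hfC : ∀ a ∈ C, f a ∈ C := fun a ha => hf.1.mapsTo ha
      have hffix : ∀ a, a ∉ C → f a = a := by
        intro a ha
        exact Equiv.Perm.notMem_support.mp (fun hs => ha (hfsupp hs))
      refine ⟨f * g', ?_⟩
      set g := f * g' with hg
      have hgC : ∀ a ∈ C, g a = f a := by
        intro a ha
        show f (g' a) = f a
        rw [hg'fix a ha]
      have hgnC : ∀ a, a ∉ C → g a = g' a := by
        intro a ha
        show f (g' a) = g' a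
        exact hffix _ (hg'C a ha)
      -- power lemmas
      have powC : ∀ (k : ℕ) (a : Fin n), a ∈ C → (g ^ k) a = (f ^ k) a ∧ (f ^ k) a ∈ C := by
        intro k
        induction k with
        | zero => intro a ha; exact ⟨rfl, ha⟩
        | succ k ihk =>
          intro a ha
          obtain ⟨h1, h2⟩ := ihk a ha
          constructor
          · have e1 : (g ^ (k+1)) a = g ((g ^ k) a) := by rw [pow_succ']; rfl
            have e2 : (f ^ (k+1)) a = f ((f ^ k) a) := by rw [pow_succ']; rfl
            rw [e1, e2, h1, hgC _ h2]
          · have e2 : (f ^ (k+1)) a = f ((f ^ k) a) := by rw [pow_succ']; rfl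
            rw [e2]; exact hfC _ h2
      have pownC : ∀ (k : ℕ) (a : Fin n), a ∉ C → (g ^ k) a = (g' ^ k) a ∧ (g' ^ k) a ∉ C := by
        intro k
        induction k with
        | zero => intro a ha; exact ⟨rfl, ha⟩
        | succ k ihk =>
          intro a ha
          obtain ⟨h1, h2⟩ := ihk a ha
          constructor
          · have e1 : (g ^ (k+1)) a = g ((g ^ k) a) := by rw [pow_succ']; rfl
            have e2 : (g' ^ (k+1)) a = g' ((g' ^ k) a) := by rw [pow_succ']; rfl
            rw [e1, e2, h1, hgnC _ h2]
          · have e2 : (g' ^ (k+1)) a = g' ((g' ^ k) a) := by rw [pow_succ']; rfl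
            rw [e2]; exact hg'C _ h2
      apply Setoid.ext
      intro a b
      rw [cycS_rel]
      by_cases ha : a ∈ C
      · constructor
        · intro hsc
          obtain ⟨k, -, hk⟩ := hsc.exists_pow_eq'
          have := powC k a ha
          have hbC : b ∈ C := by rw [← hk, this.1]; exact this.2
          rw [memC] at ha hbC
          exact τ.trans (τ.symm ha) hbC
        · intro hab
          have hbC : b ∈ C := by
            rw [memC] at ha ⊢
            exact τ.trans ha hab
          obtain ⟨k, -, hk⟩ := hf.exists_pow_eq ha hbC
          refine ⟨(k : ℤ), ?_⟩
          rw [zpow_natCast, (powC k a ha).1, hk]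
      · constructor
        · intro hsc
          obtain ⟨k, -, hk⟩ := hsc.exists_pow_eq'
          have := pownC k a ha
          have hb : b = (g' ^ k) a := by rw [← hk, this.1]
          have hscg' : g'.SameCycle a b := ⟨(k : ℤ), by rw [zpow_natCast, ← hb]⟩
          have : (cycS g') a b := hscg'
          rw [hg'] at this
          rcases (hrel' a b).mp this with rfl | ⟨h1, -, -⟩
          · exact τ.refl a
          · exact h1
        · intro hab
          have hbC : b ∉ C := by
            intro hb
            rw [memC] at hb
            exact ha ((memC a).mpr (τ.trans hb (τ.symm hab)))
          have : (cycS g') a b := by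
            rw [hg']
            exact (hrel' a b).mpr (Or.inr ⟨hab, fun h => ha ((memC a).mpr h),
              fun h => hbC ((memC b).mpr h)⟩)
          obtain ⟨k, -, hk⟩ := (Equiv.Perm.SameCycle.exists_pow_eq' this)
          exact ⟨(k : ℤ), by rw [zpow_natCast, (pownC k a ha).1, hk]⟩
  exact key _ τ le_rfl

end UpResp
end S3

section S4
namespace UpResp
open Equiv Equiv.Perm
variable {n : ℕ}

noncomputable def classes (τ : Setoid (Fin n)) : Finset (Finset (Fin n)) :=
  Finset.univ.image (fun x => Finset.univ.filter (fun y => τ x y))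

lemma cfilter_eq (g : Equiv.Perm (Fin n)) (x : Fin n) :
    Finset.univ.filter (fun y => (cycS g) x y)
      = Finset.univ.filter (fun y => g.SameCycle x y) :=
  Finset.filter_congr (fun y _ => Iff.rfl)

lemma cycleType_eq_classes (g : Equiv.Perm (Fin n)) :
    g.cycleType = (((classes (cycS g)).filter fun C => 2 ≤ C.card).val).map Finset.card := by
  classical
  have hinj : Set.InjOn Equiv.Perm.support (g.cycleFactorsFinset : Set (Equiv.Perm (Fin n))) := by
    intro c1 h1 c2 h2 hsup
    by_contra hne
    have hdisj := g.cycleFactorsFinset_pairwise_disjoint h1 h2 hne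
    have hcyc : c1.IsCycle := (mem_cycleFactorsFinset_iff.mp h1).1
    obtain ⟨x, hx, -⟩ := hcyc
    have hx1 : x ∈ c1.support := mem_support.mpr hx
    have hx2 : x ∈ c2.support := by rw [← hsup]; exact hx1
    have := hdisj.disjoint_support
    exact absurd hx2 (Finset.disjoint_left.mp this hx1)
  have himg : g.cycleFactorsFinset.image Equiv.Perm.support
      = (classes (cycS g)).filter fun C => 2 ≤ C.card := by
    ext C
    simp only [Finset.mem_image, Finset.mem_filter, classes, Finset.mem_univ, true_and]
    constructor
    · rintro ⟨c, hc, rfl⟩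
      obtain ⟨hcyc, happ⟩ := mem_cycleFactorsFinset_iff.mp hc
      obtain ⟨x, hx, -⟩ := hcyc
      have hxs : x ∈ c.support := mem_support.mpr hx
      have hceq : c = g.cycleOf x := cycle_is_cycleOf hxs hc
      have hgx : g x ≠ x := by rw [← happ x hxs]; exact hx
      have hsupp : c.support = Finset.univ.filter (fun y => g.SameCycle x y) := by
        rw [hceq]
        ext y
        simp only [Finset.mem_filter, Finset.mem_univ, true_and, mem_support_cycleOf_iff]
        exact ⟨fun ⟨h1, _⟩ => h1, fun h1 => ⟨h1, mem_support.mpr hgx⟩⟩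
      constructor
      · exact ⟨x, (cfilter_eq g x).trans hsupp.symm⟩
      · rw [hsupp]
        refine Finset.one_lt_card.mpr ⟨x, ?_, g x, ?_, fun h => hgx h.symm⟩
        · simp [Equiv.Perm.SameCycle.refl]
        · simp only [Finset.mem_filter, Finset.mem_univ, true_and]
          exact ⟨1, by simp⟩
    · rintro ⟨⟨x0, rfl⟩, hcard⟩
      rw [cfilter_eq] at hcard ⊢
      have hx0 : g x0 ≠ x0 := by
        intro hfix
        obtain ⟨a, ha, b, hb, hab⟩ := Finset.one_lt_card.mp hcard
        simp only [Finset.mem_filter, Finset.mem_univ, true_and] at ha hb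
        have ha' : x0 = a := ha.eq_of_left hfix
        have hb' : x0 = b := hb.eq_of_left hfix
        exact hab (ha'.symm.trans hb')
      refine ⟨g.cycleOf x0, cycleOf_mem_cycleFactorsFinset_iff.mpr (mem_support.mpr hx0), ?_⟩
      ext y
      simp only [Finset.mem_filter, Finset.mem_univ, true_and, mem_support_cycleOf_iff]
      exact ⟨fun ⟨h1, _⟩ => h1, fun h1 => ⟨h1, mem_support.mpr hx0⟩⟩
  calc g.cycleType
      = Multiset.map (Finset.card ∘ Equiv.Perm.support) g.cycleFactorsFinset.val := cycleType_def g
    _ = Multiset.map Finset.card (Multiset.map Equiv.Perm.support g.cycleFactorsFinset.val) := by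
        rw [Multiset.map_map]
    _ = Multiset.map Finset.card (g.cycleFactorsFinset.image Equiv.Perm.support).val := by
        rw [Finset.image_val_of_injOn hinj]
    _ = _ := by rw [himg]

lemma sign_eq_of_cycS_eq {g h : Equiv.Perm (Fin n)} (he : cycS g = cycS h) :
    Equiv.Perm.sign g = Equiv.Perm.sign h := by
  rw [Equiv.Perm.sign_of_cycleType, Equiv.Perm.sign_of_cycleType,
    cycleType_eq_classes g, cycleType_eq_classes h, he]

noncomputable def cmu (τ : Setoid (Fin n)) : ℚ :=
  ∑ g : Equiv.Perm (Fin n), if cycS g = τ then ((Equiv.Perm.sign g : ℤ) : ℚ) else 0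

lemma cmu_ne_zero (τ : Setoid (Fin n)) : cmu τ ≠ 0 := by
  classical
  obtain ⟨g0, hg0⟩ := exists_cycS τ
  have hconst : cmu τ = ∑ g : Equiv.Perm (Fin n),
      if cycS g = τ then ((Equiv.Perm.sign g0 : ℤ) : ℚ) else 0 := by
    unfold cmu
    refine Finset.sum_congr rfl fun g _ => ?_
    by_cases h : cycS g = τ
    · rw [if_pos h, if_pos h, sign_eq_of_cycS_eq (h.trans hg0.symm)]
    · rw [if_neg h, if_neg h]
  rw [hconst, ← Finset.sum_filter, Finset.sum_const]
  have hne : (Finset.univ.filter fun g : Equiv.Perm (Fin n) => cycS g = τ).Nonempty :=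
    ⟨g0, Finset.mem_filter.mpr ⟨Finset.mem_univ _, hg0⟩⟩
  have hpos := Finset.card_pos.mpr hne
  have hccast : (((Finset.univ.filter fun g : Equiv.Perm (Fin n) => cycS g = τ).card : ℚ)) ≠ 0 :=
    Nat.cast_ne_zero.mpr hpos.ne'
  rcases Int.units_eq_one_or (Equiv.Perm.sign g0) with h1 | h1 <;>
    rw [h1] <;> simp [nsmul_eq_mul, hccast]
end UpResp
end S4

section S5
namespace UpResp
variable {n : ℕ}

noncomputable def spanE (n : ℕ) : Submodule ℚ (NCF n) :=
  Submodule.span ℚ (Set.range (eFun (d := n)))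

lemma eFun_mem (σ : Setoid (Fin n)) : eFun σ ∈ spanE n :=
  Submodule.subset_span ⟨σ, rfl⟩

lemma pFun_mem (σ : Setoid (Fin n)) : pFun σ ∈ spanE n := by
  induction σ using WellFoundedLT.induction with
  | _ σ IH =>
    have hsplit : eFun σ = cmu σ • pFun σ
        + ∑ g : Equiv.Perm (Fin n),
            (if cycS g < σ then ((Equiv.Perm.sign g : ℤ) : ℚ) else 0) • pFun (cycS g) := by
      rw [eFun_as_p σ]
      have h1 : ∀ g : Equiv.Perm (Fin n),
          (if cycS g ≤ σ then ((Equiv.Perm.sign g : ℤ) : ℚ) else 0) • pFun (cycS g)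
            = (if cycS g = σ then ((Equiv.Perm.sign g : ℤ) : ℚ) else 0) • pFun σ
              + (if cycS g < σ then ((Equiv.Perm.sign g : ℤ) : ℚ) else 0) • pFun (cycS g) := by
        intro g
        rcases eq_or_ne (cycS g) σ with heq | hne
        · rw [if_pos heq.le, if_pos heq, if_neg (by rw [heq]; exact lt_irrefl σ), heq,
            zero_smul, add_zero]
        · rw [if_neg hne]
          rcases Classical.em (cycS g ≤ σ) with hle | hnle
          · rw [if_pos hle, if_pos (lt_of_le_of_ne hle hne), zero_smul, zero_add]
          · rw [if_neg hnle, if_neg (fun h => hnle h.le)]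
            simp only [zero_smul, add_zero]
      rw [Finset.sum_congr rfl (fun g _ => h1 g), Finset.sum_add_distrib, ← Finset.sum_smul]
      rfl
    have hmem : eFun σ - ∑ g : Equiv.Perm (Fin n),
        (if cycS g < σ then ((Equiv.Perm.sign g : ℤ) : ℚ) else 0) • pFun (cycS g) ∈ spanE n := by
      apply Submodule.sub_mem _ (eFun_mem σ)
      apply Submodule.sum_mem
      intro g _
      rcases Classical.em (cycS g < σ) with hlt | hnlt
      · exact Submodule.smul_mem _ _ (IH _ hlt)
      · rw [if_neg hnlt, zero_smul]; exact Submodule.zero_mem _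
    have heq : pFun σ = (cmu σ)⁻¹ • (eFun σ - ∑ g : Equiv.Perm (Fin n),
        (if cycS g < σ then ((Equiv.Perm.sign g : ℤ) : ℚ) else 0) • pFun (cycS g)) := by
      rw [hsplit]
      rw [add_sub_cancel_right]
      rw [inv_smul_smul₀ (cmu_ne_zero σ)]
    rw [heq]
    exact Submodule.smul_mem _ _ hmem

lemma pFun_eq_sum_m (σ : Setoid (Fin n)) :
    pFun σ = ∑ ρ : Setoid (Fin n), (if σ ≤ ρ then (1 : ℚ) else 0) • mFun ρ := by
  funext w
  rw [Finset.sum_apply]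
  have h1 : ∀ ρ : Setoid (Fin n),
      ((if σ ≤ ρ then (1 : ℚ) else 0) • mFun ρ) w
        = (if σ ≤ ρ then (1 : ℚ) else 0) * (if kerS w = ρ then 1 else 0) := by
    intro ρ
    show (if σ ≤ ρ then (1:ℚ) else 0) * mFun ρ w = _
    rw [mFun_eq_ind]
  rw [Finset.sum_congr rfl (fun ρ _ => h1 ρ)]
  rw [Finset.sum_eq_single (kerS w)]
  · rw [pFun_eq_ind, if_pos rfl, mul_one]
  · intro ρ _ hne
    rw [if_neg (show ¬ (kerS w = ρ) from fun h => hne h.symm), mul_zero]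
  · intro h
    exact absurd (Finset.mem_univ _) h

lemma mFun_mem (σ : Setoid (Fin n)) : mFun σ ∈ spanE n := by
  induction σ using WellFoundedGT.induction with
  | _ σ IH =>
    have hsplit : pFun σ = mFun σ
        + ∑ ρ : Setoid (Fin n), (if σ < ρ then (1 : ℚ) else 0) • mFun ρ := by
      rw [pFun_eq_sum_m σ]
      have h1 : ∀ ρ : Setoid (Fin n),
          (if σ ≤ ρ then (1 : ℚ) else 0) • mFun ρ
            = (if σ = ρ then (1 : ℚ) else 0) • mFun σ
              + (if σ < ρ then (1 : ℚ) else 0) • mFun ρ := by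
        intro ρ
        rcases eq_or_ne σ ρ with heq | hne
        · rw [if_pos heq.le, if_pos heq, if_neg (by rw [← heq]; exact lt_irrefl σ), heq,
            zero_smul, add_zero]
        · rw [if_neg hne]
          rcases Classical.em (σ ≤ ρ) with hle | hnle
          · rw [if_pos hle, if_pos (lt_of_le_of_ne hle hne), zero_smul, zero_add]
          · rw [if_neg hnle, if_neg (fun h => hnle h.le)]
            simp only [zero_smul, add_zero]
      rw [Finset.sum_congr rfl (fun ρ _ => h1 ρ), Finset.sum_add_distrib, ← Finset.sum_smul]
      rw [Finset.sum_ite_eq Finset.univ σ (fun _ => (1:ℚ))]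
      rw [if_pos (Finset.mem_univ σ), one_smul]
    have heq : mFun σ = pFun σ
        - ∑ ρ : Setoid (Fin n), (if σ < ρ then (1 : ℚ) else 0) • mFun ρ := by
      rw [hsplit, add_sub_cancel_right]
    rw [heq]
    apply Submodule.sub_mem _ (pFun_mem σ)
    apply Submodule.sum_mem
    intro ρ _
    rcases Classical.em (σ < ρ) with hlt | hnlt
    · exact Submodule.smul_mem _ _ (IH _ hlt)
    · rw [if_neg hnlt, zero_smul]; exact Submodule.zero_mem _

noncomputable def reprW (σ : Setoid (Fin n)) : Fin n → ℕ := fun i =>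
  ((Finset.univ.filter (fun j => σ i j)).min'
    ⟨i, Finset.mem_filter.mpr ⟨Finset.mem_univ i, σ.refl i⟩⟩ : Fin n).val

lemma kerS_reprW (σ : Setoid (Fin n)) : kerS (reprW σ) = σ := by
  apply Setoid.ext
  intro i j
  rw [kerS_rel]
  constructor
  · intro h
    have hi := Finset.min'_mem (Finset.univ.filter (fun j' => σ i j'))
      ⟨i, Finset.mem_filter.mpr ⟨Finset.mem_univ i, σ.refl i⟩⟩
    have hj := Finset.min'_mem (Finset.univ.filter (fun j' => σ j j'))
      ⟨j, Finset.mem_filter.mpr ⟨Finset.mem_univ j, σ.refl j⟩⟩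
    rw [Finset.mem_filter] at hi hj
    have heq : (Finset.univ.filter (fun j' => σ i j')).min'
        ⟨i, Finset.mem_filter.mpr ⟨Finset.mem_univ i, σ.refl i⟩⟩
        = (Finset.univ.filter (fun j' => σ j j')).min'
        ⟨j, Finset.mem_filter.mpr ⟨Finset.mem_univ j, σ.refl j⟩⟩ :=
      Fin.val_injective h
    rw [heq] at hi
    exact σ.trans hi.2 (σ.symm hj.2)
  · intro h
    have hset : Finset.univ.filter (fun j' => σ i j') = Finset.univ.filter (fun j' => σ j j') := by
      apply Finset.filter_congr
      intro y _
      exact ⟨fun hy => σ.trans (σ.symm h) hy, fun hy => σ.trans h hy⟩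
    have pfi : (Finset.univ.filter (fun j' => σ i j')).Nonempty :=
      ⟨i, Finset.mem_filter.mpr ⟨Finset.mem_univ i, σ.refl i⟩⟩
    have pfj : (Finset.univ.filter (fun j' => σ j j')).Nonempty :=
      ⟨j, Finset.mem_filter.mpr ⟨Finset.mem_univ j, σ.refl j⟩⟩
    have hmin : (Finset.univ.filter (fun j' => σ i j')).min' pfi
        = (Finset.univ.filter (fun j' => σ j j')).min' pfj := by
      apply le_antisymm
      · apply Finset.min'_le
        rw [hset]
        exact Finset.min'_mem _ _
      · apply Finset.min'_le
        rw [← hset]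
        exact Finset.min'_mem _ _
    show ((Finset.univ.filter (fun j' => σ i j')).min' _ : Fin n).val
        = ((Finset.univ.filter (fun j' => σ j j')).min' _ : Fin n).val
    rw [hmin]

lemma kernel_invariant_mem (F : NCF n)
    (hF : ∀ v w : Fin n → ℕ, (∀ i j, v i = v j ↔ w i = w j) → F v = F w) :
    F ∈ spanE n := by
  have hdecomp : F = ∑ σ : Setoid (Fin n), F (reprW σ) • mFun σ := by
    funext w
    rw [Finset.sum_apply]
    have h1 : ∀ σ : Setoid (Fin n),
        (F (reprW σ) • mFun σ) w = F (reprW σ) * (if kerS w = σ then 1 else 0) := by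
      intro σ
      show F (reprW σ) * mFun σ w = _
      rw [mFun_eq_ind]
    rw [Finset.sum_congr rfl (fun σ _ => h1 σ), Finset.sum_eq_single (kerS w)]
    · rw [if_pos rfl, mul_one]
      apply hF
      intro i j
      have h2 : kerS (reprW (kerS w)) = kerS w := kerS_reprW (kerS w)
      have h3 : (kerS (reprW (kerS w))) i j ↔ (kerS w) i j := by rw [h2]
      exact h3.symm
    · intro ρ _ hne
      rw [if_neg (show ¬ (kerS w = ρ) from fun h => hne h.symm), mul_zero]
    · intro h
      exact absurd (Finset.mem_univ _) h
  rw [hdecomp]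
  apply Submodule.sum_mem
  intro σ _
  exact Submodule.smul_mem _ _ (mFun_mem σ)

lemma exists_expansion (F : NCF n)
    (hF : ∀ v w : Fin n → ℕ, (∀ i j, v i = v j ↔ w i = w j) → F v = F w) :
    ∃ a : Setoid (Fin n) → ℚ, F = ∑ σ : Setoid (Fin n), a σ • eFun σ := by
  have := kernel_invariant_mem F hF
  rw [spanE, Submodule.mem_span_range_iff_exists_fun] at this
  obtain ⟨c, hc⟩ := this
  exact ⟨c, hc.symm⟩

end UpResp
end S5

section T
-- depends on pinned defs: blockCard, sizes, cls (added in harness below)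
namespace UpResp
variable {n : ℕ}

def mapSetoid (e : Equiv.Perm (Fin n)) (σ : Setoid (Fin n)) : Setoid (Fin n) :=
  ⟨fun x y => σ (e.symm x) (e.symm y),
   ⟨fun _ => σ.refl _, fun h => σ.symm h, fun h1 h2 => σ.trans h1 h2⟩⟩

lemma mapSetoid_rel (e : Equiv.Perm (Fin n)) (σ : Setoid (Fin n)) (x y : Fin n) :
    (mapSetoid e σ) x y ↔ σ (e.symm x) (e.symm y) := Iff.rfl

lemma mapSetoid_symm_map (e : Equiv.Perm (Fin n)) (σ : Setoid (Fin n)) :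
    mapSetoid e.symm (mapSetoid e σ) = σ := by
  apply Setoid.ext
  intro x y
  rw [mapSetoid_rel, mapSetoid_rel]
  simp

lemma mapSetoid_map_symm (e : Equiv.Perm (Fin n)) (σ : Setoid (Fin n)) :
    mapSetoid e (mapSetoid e.symm σ) = σ := by
  apply Setoid.ext
  intro x y
  rw [mapSetoid_rel, mapSetoid_rel]
  simp

def mapSetoidEquiv (e : Equiv.Perm (Fin n)) : Setoid (Fin n) ≃ Setoid (Fin n) :=
  ⟨mapSetoid e, mapSetoid e.symm, mapSetoid_symm_map e, mapSetoid_map_symm e⟩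

lemma eFun_mapSetoid (e : Equiv.Perm (Fin n)) (σ : Setoid (Fin n)) (w : Fin n → ℕ) :
    eFun (mapSetoid e σ) w = eFun σ (w ∘ e) := by
  unfold eFun
  congr 1
  apply propext
  constructor
  · intro h i j hne hij
    have := h (e i) (e j) (fun hc => hne (e.injective hc))
    simp only [mapSetoid_rel, Equiv.symm_apply_apply] at this
    exact this hij
  · intro h i j hne hij
    rw [mapSetoid_rel] at hij
    have := h (e.symm i) (e.symm j) (fun hc => hne (e.symm.injective hc)) hij
    simpa using this

/-- class of x -/
noncomputable def cl (σ : Setoid (Fin n)) (x : Fin n) : Finset (Fin n) :=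
  Finset.univ.filter (fun y => σ x y)

lemma mem_cl {σ : Setoid (Fin n)} {x y : Fin n} : y ∈ cl σ x ↔ σ x y := by
  simp [cl]

lemma cl_eq_iff {σ : Setoid (Fin n)} {x y : Fin n} : cl σ x = cl σ y ↔ σ x y := by
  constructor
  · intro h
    have : y ∈ cl σ y := mem_cl.mpr (σ.refl y)
    rw [← h] at this
    exact mem_cl.mp this
  · intro h
    ext z
    rw [mem_cl, mem_cl]
    exact ⟨fun hz => σ.trans (σ.symm h) hz, fun hz => σ.trans h hz⟩

noncomputable def Cset (σ : Setoid (Fin n)) : Finset (Finset (Fin n)) :=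
  Finset.univ.image (cl σ)

lemma cl_mem_Cset (σ : Setoid (Fin n)) (x : Fin n) : cl σ x ∈ Cset σ :=
  Finset.mem_image_of_mem _ (Finset.mem_univ x)

lemma cl_of_mem {σ : Setoid (Fin n)} {C : Finset (Fin n)} (hC : C ∈ Cset σ)
    {a : Fin n} (ha : a ∈ C) : cl σ a = C := by
  obtain ⟨z, -, rfl⟩ := Finset.mem_image.mp hC
  exact cl_eq_iff.mpr (σ.symm (mem_cl.mp ha))

lemma rel_of_mem_same {σ : Setoid (Fin n)} {C : Finset (Fin n)} (hC : C ∈ Cset σ)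
    {a b : Fin n} (ha : a ∈ C) (hb : b ∈ C) : σ a b := by
  have h1 := cl_of_mem hC ha
  have h2 := cl_of_mem hC hb
  exact cl_eq_iff.mp (h1.trans h2.symm)

lemma sizes_eq_Cset (σ : Setoid (Fin n)) :
    sizes σ = (Cset σ).val.map Finset.card := rfl

lemma blockCard_eq_card_cl (σ : Setoid (Fin n)) (i : Fin n) :
    blockCard σ i = (cl σ i).card := rfl

lemma sizes_mapSetoid (e : Equiv.Perm (Fin n)) (σ : Setoid (Fin n)) :
    sizes (mapSetoid e σ) = sizes σ := by
  classical
  have hcl : ∀ x, cl (mapSetoid e σ) x = (cl σ (e.symm x)).image e := by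
    intro x
    ext y
    simp only [mem_cl, Finset.mem_image, mapSetoid_rel]
    constructor
    · intro h
      exact ⟨e.symm y, h, by simp⟩
    · rintro ⟨z, hz, rfl⟩
      simpa using hz
  rw [sizes_eq_Cset, sizes_eq_Cset]
  have h1 : Cset (mapSetoid e σ) = (Cset σ).image (fun C => C.image e) := by
    unfold Cset
    ext C
    simp only [Finset.mem_image]
    constructor
    · rintro ⟨x, -, rfl⟩
      exact ⟨cl σ (e.symm x), ⟨e.symm x, Finset.mem_univ _, rfl⟩, (hcl x).symm⟩
    · rintro ⟨D, ⟨x, -, rfl⟩, rfl⟩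
      exact ⟨e x, Finset.mem_univ _, by rw [hcl (e x)]; simp⟩
  rw [h1]
  have hinj : Set.InjOn (fun C : Finset (Fin n) => C.image e) ↑(Cset σ) :=
    fun C1 _ C2 _ h => Finset.image_injective e.injective h
  rw [Finset.image_val_of_injOn hinj, Multiset.map_map]
  apply Multiset.map_congr rfl
  intro C _
  exact Finset.card_image_of_injective C e.injective

lemma blockCard_mapSetoid (e : Equiv.Perm (Fin n)) (σ : Setoid (Fin n)) (i : Fin n) :
    blockCard (mapSetoid e σ) i = blockCard σ (e.symm i) := by
  rw [blockCard_eq_card_cl, blockCard_eq_card_cl]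
  have hcl : cl (mapSetoid e σ) i = (cl σ (e.symm i)).image e := by
    ext y
    simp only [mem_cl, Finset.mem_image, mapSetoid_rel]
    constructor
    · intro h
      exact ⟨e.symm y, h, by simp⟩
    · rintro ⟨z, hz, rfl⟩
      simpa using hz
  rw [hcl, Finset.card_image_of_injective _ e.injective]

lemma cls_mapSetoid (e : Equiv.Perm (Fin n)) (σ ρ : Setoid (Fin n)) (i : Fin n)
    (hi : e i = i) : cls i (mapSetoid e σ) ρ ↔ cls i σ ρ := by
  have hsymm : e.symm i = i := by
    apply e.injective
    rw [Equiv.apply_symm_apply, hi]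
  unfold cls
  rw [sizes_mapSetoid, blockCard_mapSetoid, hsymm]

/-- bijection pairing lemma. -/
lemma pair_lemma {X Y : Type*} [Nonempty Y] [DecidableEq X] [DecidableEq Y] :
    ∀ (s : Finset X) (t : Finset Y) (f : X → ℕ) (g : Y → ℕ),
      s.val.map f = t.val.map g →
      ∃ Θ : X → Y, Set.BijOn Θ ↑s ↑t ∧ ∀ a ∈ s, g (Θ a) = f a := by
  intro s
  induction s using Finset.strongInduction with
  | _ s IH =>
    intro t f g hmap
    rcases Finset.eq_empty_or_nonempty s with rfl | ⟨a, ha⟩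
    · have ht : t = ∅ := by
        have h0 : t.val.map g = 0 := by rw [← hmap]; simp
        have h1 : t.val = 0 := Multiset.map_eq_zero.mp h0
        exact Finset.val_eq_zero.mp h1
      subst ht
      exact ⟨fun _ => Classical.arbitrary Y, by simp [Set.bijOn_empty], by simp⟩
    · have hfa : f a ∈ t.val.map g := by
        rw [← hmap]
        exact Multiset.mem_map_of_mem f ha
      obtain ⟨b, hb, hgb⟩ := Multiset.mem_map.mp hfa
      have hbt : b ∈ t := hb
      have hrec : (s.erase a).val.map f = (t.erase b).val.map g := by
        have h1 : s.val = a ::ₘ (s.erase a).val := by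
          rw [Finset.erase_val, Multiset.cons_erase ha]
        have h2 : t.val = b ::ₘ (t.erase b).val := by
          rw [Finset.erase_val, Multiset.cons_erase hbt]
        rw [h1, h2] at hmap
        rw [Multiset.map_cons, Multiset.map_cons, hgb] at hmap
        exact (Multiset.cons_inj_right _).mp hmap
      obtain ⟨Θ', hbij', hval'⟩ := IH (s.erase a) (Finset.erase_ssubset ha) (t.erase b) f g hrec
      refine ⟨fun x => if x = a then b else Θ' x, ⟨?_, ?_, ?_⟩, ?_⟩
      · intro x hx
        by_cases hxa : x = a
        · simp [hxa, hbt]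
        · simp only [if_neg hxa]
          have : Θ' x ∈ t.erase b := hbij'.mapsTo (Finset.mem_erase.mpr ⟨hxa, hx⟩)
          exact Finset.mem_of_mem_erase this
      · intro x hx y hy hxy
        by_cases hxa : x = a <;> by_cases hya : y = a
        · rw [hxa, hya]
        · exfalso
          simp only [if_pos hxa, if_neg hya] at hxy
          have : Θ' y ∈ t.erase b := hbij'.mapsTo (Finset.mem_erase.mpr ⟨hya, hy⟩)
          rw [← hxy] at this
          exact (Finset.mem_erase.mp this).1 rfl
        · exfalso
          simp only [if_neg hxa, if_pos hya] at hxy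
          have : Θ' x ∈ t.erase b := hbij'.mapsTo (Finset.mem_erase.mpr ⟨hxa, hx⟩)
          rw [hxy] at this
          exact (Finset.mem_erase.mp this).1 rfl
        · simp only [if_neg hxa, if_neg hya] at hxy
          exact hbij'.injOn (Finset.mem_erase.mpr ⟨hxa, hx⟩)
            (Finset.mem_erase.mpr ⟨hya, hy⟩) hxy
      · intro y hy
        by_cases hyb : y = b
        · exact ⟨a, ha, by simp [hyb]⟩
        · obtain ⟨x, hx, hΘx⟩ := hbij'.surjOn (Finset.mem_coe.mpr
            (Finset.mem_erase.mpr ⟨hyb, hy⟩))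
          have hxa : x ≠ a := (Finset.mem_erase.mp hx).1
          exact ⟨x, Finset.mem_of_mem_erase hx, by simp only [if_neg hxa]; exact hΘx⟩
      · intro x hx
        by_cases hxa : x = a
        · simp only [if_pos hxa, hxa]
          exact hgb
        · simp only [if_neg hxa]
          exact hval' x (Finset.mem_erase.mpr ⟨hxa, hx⟩)

end UpResp
end T

section T2
namespace UpResp
variable {n : ℕ}

lemma exists_perm_of_cls (γ τ : Setoid (Fin n)) (i0 : Fin n)
    (h : cls i0 γ τ) :
    ∃ δ : Equiv.Perm (Fin n), δ i0 = i0 ∧ ∀ x y, γ x y ↔ τ (δ x) (δ y) := by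
  classical
  obtain ⟨hsizes, hbc⟩ := h
  set B1 := cl γ i0 with hB1
  set B2 := cl τ i0 with hB2
  have hcardB : B1.card = B2.card := hbc
  have hB1mem : B1 ∈ Cset γ := cl_mem_Cset γ i0
  have hB2mem : B2 ∈ Cset τ := cl_mem_Cset τ i0
  have herase : ((Cset γ).erase B1).val.map Finset.card
      = ((Cset τ).erase B2).val.map Finset.card := by
    have h1 : (Cset γ).val = B1 ::ₘ ((Cset γ).erase B1).val := by
      rw [Finset.erase_val, Multiset.cons_erase hB1mem]
    have h2 : (Cset τ).val = B2 ::ₘ ((Cset τ).erase B2).val := by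
      rw [Finset.erase_val, Multiset.cons_erase hB2mem]
    have hs := hsizes
    rw [sizes_eq_Cset, sizes_eq_Cset, h1, h2, Multiset.map_cons, Multiset.map_cons,
      hcardB] at hs
    exact (Multiset.cons_inj_right _).mp hs
  obtain ⟨Θ, hΘbij, hΘcard⟩ := pair_lemma ((Cset γ).erase B1) ((Cset τ).erase B2)
    Finset.card Finset.card herase
  have hclNe : ∀ x : Fin n, ¬ γ i0 x → cl γ x ∈ (Cset γ).erase B1 := by
    intro x hx
    refine Finset.mem_erase.mpr ⟨?_, cl_mem_Cset γ x⟩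
    intro hc
    rw [hB1] at hc
    exact hx (γ.symm (cl_eq_iff.mp hc))
  have hΘmem : ∀ x : Fin n, ¬ γ i0 x → Θ (cl γ x) ∈ (Cset τ).erase B2 :=
    fun x hx => hΘbij.mapsTo (hclNe x hx)
  have hΘc : ∀ (x : Fin n), ¬ γ i0 x → (cl γ x).card = (Θ (cl γ x)).card :=
    fun x hx => (hΘcard _ (hclNe x hx)).symm
  have hi0B1 : i0 ∈ B1 := mem_cl.mpr (γ.refl i0)
  have hi0B2 : i0 ∈ B2 := mem_cl.mpr (τ.refl i0)
  let e0 : {x // x ∈ B1} ≃ {y // y ∈ B2} := Finset.equivOfCardEq hcardB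
  let eB : {x // x ∈ B1} ≃ {y // y ∈ B2} :=
    e0.trans (Equiv.swap (e0 ⟨i0, hi0B1⟩) ⟨i0, hi0B2⟩)
  have heBi0 : (eB ⟨i0, hi0B1⟩ : {y // y ∈ B2}) = ⟨i0, hi0B2⟩ := by
    show Equiv.swap (e0 ⟨i0, hi0B1⟩) ⟨i0, hi0B2⟩ (e0 ⟨i0, hi0B1⟩) = ⟨i0, hi0B2⟩
    rw [Equiv.swap_apply_left]
  have hself : ∀ x : Fin n, x ∈ cl γ x := fun x => mem_cl.mpr (γ.refl x)
  let D : Fin n → Fin n := fun x =>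
    if hx : γ i0 x then (eB ⟨x, mem_cl.mpr hx⟩ : {y // y ∈ B2}).val
    else ((Finset.equivOfCardEq (hΘc x hx)) ⟨x, hself x⟩ : {y // y ∈ Θ (cl γ x)}).val
  have hD1 : ∀ (x : Fin n), γ i0 x → D x ∈ B2 := by
    intro x hx
    have hxx : D x = ((eB ⟨x, mem_cl.mpr hx⟩ : {z // z ∈ B2}) : Fin n) := dif_pos hx
    rw [hxx]
    exact (eB ⟨x, mem_cl.mpr hx⟩).2
  have hD2 : ∀ (x : Fin n), ¬ γ i0 x → D x ∈ Θ (cl γ x) := by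
    intro x hx
    have hxx : D x = ((Finset.equivOfCardEq (hΘc x hx)) ⟨x, hself x⟩
        : {z // z ∈ Θ (cl γ x)}).val := dif_neg hx
    rw [hxx]
    exact ((Finset.equivOfCardEq (hΘc x hx)) ⟨x, hself x⟩).2
  have hΘcl : ∀ (x : Fin n), ¬ γ i0 x → Θ (cl γ x) ∈ Cset τ ∧ Θ (cl γ x) ≠ B2 := by
    intro x hx
    have hmem := hΘmem x hx
    rw [Finset.mem_erase] at hmem
    exact ⟨hmem.2, hmem.1⟩
  have hdisj : ∀ C1 C2 : Finset (Fin n), C1 ∈ Cset τ → C2 ∈ Cset τ → C1 ≠ C2 →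
      ∀ a, a ∈ C1 → a ∉ C2 := by
    intro C1 C2 h1 h2 hne a ha1 ha2
    exact hne ((cl_of_mem h1 ha1).symm.trans (cl_of_mem h2 ha2))
  have hDeq : ∀ (x : Fin n) (hx : ¬ γ i0 x) (C : Finset (Fin n)) (hC : cl γ x = C),
      ∀ (hmemC : x ∈ C) (hcc : C.card = (Θ C).card),
      D x = ((Finset.equivOfCardEq hcc) ⟨x, hmemC⟩ : {z // z ∈ Θ C}).val := by
    intro x hx C hC
    subst hC
    intro hmemC hcc
    exact dif_neg hx
  have hinj : Function.Injective D := by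
    intro x y hxy
    by_cases hx : γ i0 x <;> by_cases hy : γ i0 y
    · have hxx : D x = ((eB ⟨x, mem_cl.mpr hx⟩ : {z // z ∈ B2}) : Fin n) := dif_pos hx
      have hyy : D y = ((eB ⟨y, mem_cl.mpr hy⟩ : {z // z ∈ B2}) : Fin n) := dif_pos hy
      have h' := hxx.symm.trans (hxy.trans hyy)
      have h2 := eB.injective (Subtype.ext h')
      exact congrArg Subtype.val h2
    · exfalso
      obtain ⟨hmem, hne⟩ := hΘcl y hy
      exact hdisj _ _ hmem hB2mem hne (D y) (hD2 y hy) (hxy ▸ hD1 x hx)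
    · exfalso
      obtain ⟨hmem, hne⟩ := hΘcl x hx
      exact hdisj _ _ hmem hB2mem hne (D x) (hD2 x hx) (hxy ▸ hD1 y hy)
    · by_cases hcl : cl γ x = cl γ y
      · have hyC : y ∈ cl γ x := by rw [hcl]; exact hself y
        have hxx := hDeq x hx (cl γ x) rfl (hself x) (hΘc x hx)
        have hyy := hDeq y hy (cl γ x) hcl.symm hyC (hΘc x hx)
        have h' := hxx.symm.trans (hxy.trans hyy)
        have h2 := (Finset.equivOfCardEq (hΘc x hx)).injective (Subtype.ext h')
        exact congrArg Subtype.val h2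
      · exfalso
        have hneq : Θ (cl γ x) ≠ Θ (cl γ y) := by
          intro hc
          exact hcl (hΘbij.injOn (hclNe x hx) (hclNe y hy) hc)
        exact hdisj _ _ (hΘcl x hx).1 (hΘcl y hy).1 hneq (D x) (hD2 x hx)
          (hxy ▸ hD2 y hy)
  let δ : Equiv.Perm (Fin n) := Equiv.ofBijective D (Finite.injective_iff_bijective.mp hinj)
  have hδ : ∀ x, δ x = D x := fun x => rfl
  have hδi0 : δ i0 = i0 := by
    rw [hδ]
    have hxx : D i0 = ((eB ⟨i0, mem_cl.mpr (γ.refl i0)⟩ : {z // z ∈ B2}) : Fin n) :=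
      dif_pos (γ.refl i0)
    rw [hxx]
    have : (⟨i0, mem_cl.mpr (γ.refl i0)⟩ : {x // x ∈ B1}) = ⟨i0, hi0B1⟩ := rfl
    rw [this, heBi0]
  refine ⟨δ, hδi0, ?_⟩
  have hclD : ∀ x, cl τ (D x) = if γ i0 x then B2 else Θ (cl γ x) := by
    intro x
    by_cases hx : γ i0 x
    · rw [if_pos hx]
      exact cl_of_mem hB2mem (hD1 x hx)
    · rw [if_neg hx]
      exact cl_of_mem (hΘcl x hx).1 (hD2 x hx)
  intro x y
  rw [hδ, hδ, ← cl_eq_iff (σ := τ), hclD x, hclD y, ← cl_eq_iff (σ := γ)]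
  by_cases hx : γ i0 x <;> by_cases hy : γ i0 y
  · simp only [if_pos hx, if_pos hy]
    constructor
    · intro _; trivial
    · intro _; exact cl_eq_iff.mpr (γ.trans (γ.symm hx) hy)
  · simp only [if_pos hx, if_neg hy]
    apply iff_of_false
    · intro hc; exact hy (γ.trans hx (cl_eq_iff.mp hc))
    · intro hc; exact (hΘcl y hy).2 hc.symm
  · simp only [if_neg hx, if_pos hy]
    apply iff_of_false
    · intro hc; exact hx (γ.trans hy (γ.symm (cl_eq_iff.mp hc)))
    · intro hc; exact (hΘcl x hx).2 hc
  · simp only [if_neg hx, if_neg hy]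
    constructor
    · intro hc; rw [hc]
    · intro hc
      exact hΘbij.injOn (hclNe x hx) (hclNe y hy) hc

end UpResp
end T2

section F
namespace UpResp

noncomputable def extPerm {d : ℕ} (δ : Equiv.Perm (Fin (d+1))) : Equiv.Perm (Fin (d+2)) :=
  Equiv.ofBijective (fun i => if h : (i : ℕ) < d+1 then Fin.castSucc (δ ⟨i, h⟩) else i)
    (Finite.injective_iff_bijective.mp (by
      intro x y hxy
      simp only [] at hxy
      by_cases hx : (x:ℕ) < d+1 <;> by_cases hy : (y:ℕ) < d+1
      · rw [dif_pos hx, dif_pos hy] at hxy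
        have h1 := δ.injective (Fin.castSucc_injective _ hxy)
        have h2 : (⟨(x:ℕ), hx⟩ : Fin (d+1)).val = (⟨(y:ℕ), hy⟩ : Fin (d+1)).val :=
          congrArg Fin.val h1
        exact Fin.ext h2
      · rw [dif_pos hx, dif_neg hy] at hxy
        exfalso
        have h1 : ((Fin.castSucc (δ ⟨x, hx⟩)) : ℕ) < d+1 := by
          simpa using (δ ⟨x, hx⟩).isLt
        rw [hxy] at h1
        omega
      · rw [dif_neg hx, dif_pos hy] at hxy
        exfalso
        have h1 : ((Fin.castSucc (δ ⟨y, hy⟩)) : ℕ) < d+1 := by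
          simpa using (δ ⟨y, hy⟩).isLt
        rw [← hxy] at h1
        omega
      · rw [dif_neg hx, dif_neg hy] at hxy
        exact hxy))

lemma extPerm_last {d : ℕ} (δ : Equiv.Perm (Fin (d+1))) :
    extPerm δ (Fin.last (d+1)) = Fin.last (d+1) :=
  dif_neg (by simp)

lemma extPerm_d {d : ℕ} (δ : Equiv.Perm (Fin (d+1))) (hδ : δ (Fin.last d) = Fin.last d) :
    extPerm δ (⟨d, by omega⟩ : Fin (d+2)) = ⟨d, by omega⟩ := by
  have h : ((⟨d, by omega⟩ : Fin (d+2)) : ℕ) < d+1 := by simp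
  have h1 : extPerm δ (⟨d, by omega⟩ : Fin (d+2))
      = Fin.castSucc (δ ⟨d, by omega⟩) := dif_pos h
  rw [h1]
  have h2 : (⟨d, by omega⟩ : Fin (d+1)) = Fin.last d := rfl
  rw [h2, hδ]
  exact Fin.ext rfl

lemma extPerm_castSucc {d : ℕ} (δ : Equiv.Perm (Fin (d+1))) (x : Fin (d+1)) :
    extPerm δ (Fin.castSucc x) = Fin.castSucc (δ x) := by
  have h : ((Fin.castSucc x : Fin (d+2)) : ℕ) < d+1 := by simpa using x.isLt
  have h1 : extPerm δ (Fin.castSucc x) = Fin.castSucc (δ ⟨(Fin.castSucc x : Fin (d+2)), h⟩) :=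
    dif_pos h
  rw [h1]
  have h2 : (⟨((Fin.castSucc x : Fin (d+2)) : ℕ), h⟩ : Fin (d+1)) = x := Fin.ext rfl
  rw [h2]

lemma mapSetoid_of_rel {m : ℕ} {γ τ : Setoid (Fin m)} {δ : Equiv.Perm (Fin m)}
    (h : ∀ x y, γ x y ↔ τ (δ x) (δ y)) : mapSetoid δ γ = τ := by
  apply Setoid.ext
  intro x y
  rw [mapSetoid_rel, h (δ.symm x) (δ.symm y)]
  simp

lemma up_eFun_key {d : ℕ} (γ : Setoid (Fin (d+1))) (u : Fin (d+2) → ℕ) :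
    up (eFun γ) u = if (u (Fin.last (d+1)) = u ⟨d, by omega⟩ ∧
      ∀ i j, i ≠ j → γ i j → u (Fin.castSucc i) ≠ u (Fin.castSucc j)) then 1 else 0 := by
  show (if u (Fin.last (d+1)) = u ⟨d, by omega⟩ then eFun γ (fun i => u i.castSucc) else 0) = _
  by_cases hA : u (Fin.last (d+1)) = u ⟨d, by omega⟩
  · rw [if_pos hA]
    unfold eFun
    by_cases hB : ∀ i j, i ≠ j → γ i j → u (Fin.castSucc i) ≠ u (Fin.castSucc j)
    · rw [if_pos hB, if_pos ⟨hA, hB⟩]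
    · rw [if_neg hB, if_neg (fun hc => hB hc.2)]
  · rw [if_neg hA, if_neg (fun hc => hA hc.1)]

lemma up_eFun_kernel {d : ℕ} (γ : Setoid (Fin (d+1))) :
    ∀ v w : Fin (d+2) → ℕ, (∀ i j, v i = v j ↔ w i = w j) →
      up (eFun γ) v = up (eFun γ) w := by
  intro v w hvw
  rw [up_eFun_key, up_eFun_key]
  congr 1
  apply propext
  constructor
  · rintro ⟨h1, h2⟩
    exact ⟨(hvw _ _).mp h1, fun i j hne hij hc => h2 i j hne hij ((hvw _ _).mpr hc)⟩
  · rintro ⟨h1, h2⟩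
    exact ⟨(hvw _ _).mpr h1, fun i j hne hij hc => h2 i j hne hij ((hvw _ _).mp hc)⟩

lemma up_eFun_comp {d : ℕ} (γ τ : Setoid (Fin (d+1))) (δ : Equiv.Perm (Fin (d+1)))
    (hmap : mapSetoid δ γ = τ) (hlast : δ (Fin.last d) = Fin.last d) (w : Fin (d+2) → ℕ) :
    up (eFun τ) w = up (eFun γ) (w ∘ (extPerm δ)) := by
  have h1 : (w ∘ extPerm δ) (Fin.last (d+1)) = w (Fin.last (d+1)) :=
    congrArg w (extPerm_last δ)
  have h2 : (w ∘ extPerm δ) (⟨d, by omega⟩ : Fin (d+2)) = w ⟨d, by omega⟩ :=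
    congrArg w (extPerm_d δ hlast)
  show (if w (Fin.last (d+1)) = w ⟨d, by omega⟩ then eFun τ (fun i => w i.castSucc) else 0)
    = (if (w ∘ extPerm δ) (Fin.last (d+1)) = (w ∘ extPerm δ) ⟨d, by omega⟩
        then eFun γ (fun i => (w ∘ extPerm δ) i.castSucc) else 0)
  rw [h1, h2]
  have h3 : eFun γ (fun i => (w ∘ extPerm δ) i.castSucc) = eFun τ (fun i => w i.castSucc) := by
    have h4 : (fun i => (w ∘ extPerm δ) (Fin.castSucc i))
        = ((fun i => w (Fin.castSucc i)) ∘ δ) := by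
      funext i
      show w (extPerm δ (Fin.castSucc i)) = w (Fin.castSucc (δ i))
      rw [extPerm_castSucc]
    rw [h4, ← eFun_mapSetoid δ γ, hmap]
  rw [h3]

end UpResp
end F

end UpRespAux

/-- Induction respects the congruence: `e_γ ≡_d e_τ` implies `e_γ↑ ≡_{d+1} e_τ↑`. -/
theorem up_respects_congruence {d : ℕ} (γ τ : Setoid (Fin (d + 1)))
    (h : cls (Fin.last d) γ τ) :
    EquivI (Fin.last (d + 1)) (up (eFun γ)) (up (eFun τ)) := by
  classical
  obtain ⟨δ, hδlast, hrel⟩ := UpResp.exists_perm_of_cls γ τ (Fin.last d) h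
  have hmap : UpResp.mapSetoid δ γ = τ := UpResp.mapSetoid_of_rel hrel
  obtain ⟨a, ha⟩ := UpResp.exists_expansion (up (eFun γ)) (UpResp.up_eFun_kernel γ)
  set δ' := UpResp.extPerm δ with hδ'
  have hδ'last : δ' (Fin.last (d+1)) = Fin.last (d+1) := UpResp.extPerm_last δ
  set E := UpResp.mapSetoidEquiv δ' with hE
  have hEapp : ∀ σ, E σ = UpResp.mapSetoid δ' σ := fun _ => rfl
  have hτ2 : up (eFun τ) = ∑ ρ : Setoid (Fin (d+2)), a (E.symm ρ) • eFun ρ := by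
    funext w
    rw [UpResp.up_eFun_comp γ τ δ hmap hδlast w, ha]
    rw [Finset.sum_apply, Finset.sum_apply]
    refine Fintype.sum_equiv E _ _ fun σ => ?_
    show a σ * eFun σ (w ∘ δ') = a (E.symm (E σ)) * eFun (E σ) w
    rw [Equiv.symm_apply_apply, hEapp, UpResp.eFun_mapSetoid]
  refine ⟨a, fun ρ => a (E.symm ρ), ha, hτ2, ?_⟩
  intro ρ0
  refine Fintype.sum_equiv E _ _ fun σ => ?_
  show (if cls (Fin.last (d+1)) σ ρ0 then a σ else 0)
      = (if cls (Fin.last (d+1)) (E σ) ρ0 then a (E.symm (E σ)) else 0)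
  rw [Equiv.symm_apply_apply, hEapp σ,
    UpResp.cls_mapSetoid δ' σ ρ0 (Fin.last (d+1)) hδ'last]
end

section
/- The commutative chromatic symmetric function X_{P_d} of the path on d vertices is e-positive: all coefficients in its expansion in elementary symmetric functions e_λ are nonnegative. -/
open Finset

attribute [local instance] Classical.propDecidable

/-- The product of elementary symmetric polynomials indexed by a multiset of
part sizes: `e_λ`. -/
noncomputable def eProd {N : ℕ} (p : Multiset ℕ) : MvPolynomial (Fin N) ℚ :=
  (p.map (fun k => MvPolynomial.esymm (Fin N) ℚ k)).prod

section PathProof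

open MvPolynomial

variable {N : ℕ}

/-- `X_{P_n}` with `n` vertices, with `pV N 0 = 1`. -/
noncomputable def pV (N : ℕ) : ℕ → MvPolynomial (Fin N) ℚ
  | 0 => 1
  | (n+1) => Xcomm (pathEnds n) N

/-- Colorings of the path on `n+1` vertices with last vertex colored `c`. -/
noncomputable def qV (N n : ℕ) (c : Fin N) : MvPolynomial (Fin N) ℚ :=
  ∑ κ : Fin (n+1) → Fin N,
    if Proper (pathEnds n) κ ∧ κ (Fin.last n) = c then ∏ i, MvPolynomial.X (κ i) else 0

lemma proper_path_iff {n : ℕ} {C : Type*} (κ : Fin (n+1) → C) :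
    Proper (pathEnds n) κ ↔ ∀ e : Fin n, κ e.castSucc ≠ κ e.succ := by
  constructor
  · intro h e
    exact h e e.castSucc e.succ rfl
  · intro h e i j hij
    rw [pathEnds, Sym2.eq_iff] at hij
    rcases hij with ⟨rfl, rfl⟩ | ⟨rfl, rfl⟩
    · exact h e
    · exact (h e).symm

lemma pV_succ_eq_sum (N n : ℕ) : pV N (n+1) = ∑ c : Fin N, qV N n c := by
  rw [pV, Xcomm]
  simp only [qV]
  rw [Finset.sum_comm]
  refine Finset.sum_congr rfl fun κ _ => ?_
  by_cases h : Proper (pathEnds n) κ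
  · simp [h]
  · simp [h]

lemma qV_zero (N : ℕ) (c : Fin N) : qV N 0 c = MvPolynomial.X c := by
  rw [qV, Fintype.sum_equiv (Equiv.funUnique (Fin 1) (Fin N)) _
    (fun k : Fin N => if k = c then MvPolynomial.X k else 0)]
  · simp
  · intro κ
    have hp : Proper (pathEnds 0) κ := fun e i j _ => absurd e.2 (by omega)
    simp only [hp, true_and, Equiv.funUnique_apply, Fin.prod_univ_one,
      Fin.default_eq_zero, show Fin.last 0 = 0 from rfl]
    exact if_congr Iff.rfl (Fin.prod_univ_one _) rfl

lemma proper_snoc {n : ℕ} {C : Type*} (κ : Fin (n+1) → C) (c : C) :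
    Proper (pathEnds (n+1)) (Fin.snoc κ c : Fin (n+2) → C) ↔
      Proper (pathEnds n) κ ∧ κ (Fin.last n) ≠ c := by
  simp only [proper_path_iff]
  constructor
  · intro h
    constructor
    · intro e
      have := h e.castSucc
      rwa [Fin.snoc_castSucc, Fin.succ_castSucc, Fin.snoc_castSucc] at this
    · have := h (Fin.last n)
      rwa [Fin.snoc_castSucc, Fin.succ_last, Fin.snoc_last] at this
  · rintro ⟨h1, h2⟩ e
    induction e using Fin.lastCases with
    | last => rw [Fin.snoc_castSucc, Fin.succ_last, Fin.snoc_last]; exact h2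
    | cast e =>
      rw [Fin.snoc_castSucc, Fin.succ_castSucc, Fin.snoc_castSucc]
      exact h1 e

lemma qV_succ (N n : ℕ) (c : Fin N) :
    qV N (n+1) c = MvPolynomial.X c * (pV N (n+1) - qV N n c) := by
  rw [qV, ← Equiv.sum_comp (Fin.snocEquiv (fun _ : Fin (n+2) => Fin N))
      (fun κ => if Proper (pathEnds (n+1)) κ ∧ κ (Fin.last (n+1)) = c
        then ∏ i, MvPolynomial.X (κ i) else 0), Fintype.sum_prod_type]
  have hterm : ∀ (c' : Fin N) (κ : Fin (n+1) → Fin N),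
      (if Proper (pathEnds (n+1)) (Fin.snocEquiv (fun _ : Fin (n+2) => Fin N) (c', κ)) ∧
          (Fin.snocEquiv (fun _ : Fin (n+2) => Fin N) (c', κ)) (Fin.last (n+1)) = c
        then ∏ i, MvPolynomial.X ((Fin.snocEquiv (fun _ : Fin (n+2) => Fin N) (c', κ)) i) else 0)
      = if c' = c then (if Proper (pathEnds n) κ ∧ κ (Fin.last n) ≠ c
          then (∏ i, MvPolynomial.X (κ i) : MvPolynomial (Fin N) ℚ) * MvPolynomial.X c else 0) else 0 := by
    intro c' κ
    have hfun : (Fin.snocEquiv (fun _ : Fin (n+2) => Fin N)) (c', κ)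
        = (Fin.snoc κ c' : Fin (n+2) → Fin N) := funext fun i => rfl
    rw [hfun, Fin.snoc_last]
    rw [Fin.prod_univ_castSucc]
    simp only [Fin.snoc_castSucc, Fin.snoc_last]
    rw [proper_snoc]
    by_cases hc : c' = c
    · subst hc
      simp
    · simp only [if_neg hc]
      rw [if_neg]
      rintro ⟨-, h⟩; exact hc h
  simp only [hterm]
  rw [Finset.sum_comm]
  have hcol : ∀ κ : Fin (n+1) → Fin N,
      (∑ c' : Fin N, if c' = c then (if Proper (pathEnds n) κ ∧ κ (Fin.last n) ≠ c
          then (∏ i, MvPolynomial.X (κ i) : MvPolynomial (Fin N) ℚ) * MvPolynomial.X c else 0) else 0)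
      = (if Proper (pathEnds n) κ ∧ κ (Fin.last n) ≠ c
          then (∏ i, MvPolynomial.X (κ i)) * MvPolynomial.X c else 0) := by
    intro κ
    rw [Finset.sum_ite_eq' Finset.univ c]
    simp
  simp only [hcol]
  rw [pV, Xcomm, qV, mul_sub, Finset.mul_sum, Finset.mul_sum, ← Finset.sum_sub_distrib]
  refine Finset.sum_congr rfl fun κ _ => ?_
  by_cases hA : Proper (pathEnds n) κ
  · by_cases hl : κ (Fin.last n) = c
    · simp [hA, hl]
    · simp [hA, hl, mul_comm]
  · simp [hA]


lemma qV_closed (N : ℕ) : ∀ n (c : Fin N),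
    qV N n c = ∑ j ∈ Finset.range (n+1),
      (-1 : MvPolynomial (Fin N) ℚ)^j * (MvPolynomial.X c)^(j+1) * pV N (n - j) := by
  intro n
  induction n with
  | zero => intro c; simp [qV_zero, pV]
  | succ n ih =>
    intro c
    rw [qV_succ, ih c, mul_sub, Finset.mul_sum]
    have h1 : ∀ j ∈ Finset.range (n+1),
        MvPolynomial.X c * ((-1 : MvPolynomial (Fin N) ℚ)^j * (MvPolynomial.X c)^(j+1) * pV N (n-j))
        = -((-1 : MvPolynomial (Fin N) ℚ)^(j+1) * (MvPolynomial.X c)^(j+1+1) * pV N (n+1-(j+1))) := by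
      intro j hj
      rw [Nat.succ_sub_succ]
      ring
    rw [Finset.sum_congr rfl h1, Finset.sum_neg_distrib]
    conv_rhs => rw [Finset.sum_range_succ']
    simp only [pow_zero, one_mul, pow_one, Nat.sub_zero]
    ring

lemma pV_rec (N n : ℕ) :
    pV N (n+1) = ∑ j ∈ Finset.range (n+1),
      (-1 : MvPolynomial (Fin N) ℚ)^j * MvPolynomial.psum (Fin N) ℚ (j+1) * pV N (n - j) := by
  rw [pV_succ_eq_sum]
  simp only [qV_closed]
  rw [Finset.sum_comm]
  refine Finset.sum_congr rfl fun j hj => ?_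
  rw [← Finset.sum_mul, ← Finset.mul_sum, MvPolynomial.psum]

/-- Coefficients of the power series `1 - Σ_{j≥1} (-1)^{j-1} p_j t^j = E'ish`. -/
noncomputable def cC (N : ℕ) : ℕ → MvPolynomial (Fin N) ℚ :=
  fun j => if j = 0 then 1 else (-1)^j * MvPolynomial.psum (Fin N) ℚ j

lemma conv_pC (N n : ℕ) :
    ∑ ab ∈ Finset.HasAntidiagonal.antidiagonal n, pV N ab.1 * cC N ab.2 = if n = 0 then 1 else 0 := by
  rcases n with _ | n
  · simp [pV, cC]
  · rw [if_neg (Nat.succ_ne_zero n), Finset.Nat.sum_antidiagonal_eq_sum_range_succ_mk,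
      Finset.sum_range_succ]
    have h0 : pV N (n+1) * cC N (n+1-(n+1)) = pV N (n+1) := by
      simp [cC]
    have hrefl := Finset.sum_range_reflect (fun k => pV N k * cC N (n+1-k)) (n+1)
    have h2 : ∑ j ∈ Finset.range (n+1), pV N (n + 1 - 1 - j) * cC N (n+1-(n + 1 - 1 - j))
        = ∑ j ∈ Finset.range (n+1), -((-1 : MvPolynomial (Fin N) ℚ)^j
            * MvPolynomial.psum (Fin N) ℚ (j+1) * pV N (n - j)) := by
      refine Finset.sum_congr rfl fun j hj => ?_
      simp only [Finset.mem_range] at hj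
      rw [show n + 1 - 1 - j = n - j by omega, show n + 1 - (n - j) = j + 1 by omega,
        cC, if_neg (Nat.succ_ne_zero _)]
      ring
    rw [← hrefl, h2, Finset.sum_neg_distrib, ← pV_rec, h0]
    ring
lemma conv_eC (N n : ℕ) :
    ∑ ab ∈ Finset.HasAntidiagonal.antidiagonal n, MvPolynomial.esymm (Fin N) ℚ ab.1 * cC N ab.2
      = MvPolynomial.esymm (Fin N) ℚ n
        - (n : MvPolynomial (Fin N) ℚ) * MvPolynomial.esymm (Fin N) ℚ n := by
  classical
  have hsplit := Finset.sum_filter_add_sum_filter_not (Finset.HasAntidiagonal.antidiagonal n)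
    (fun a : ℕ × ℕ => a.1 < n) (fun a => MvPolynomial.esymm (Fin N) ℚ a.1 * cC N a.2)
  rw [← hsplit]
  have hsingle : Finset.filter (fun a : ℕ × ℕ => ¬ a.1 < n) (Finset.HasAntidiagonal.antidiagonal n)
      = {(n, 0)} := by
    ext a
    simp only [Finset.mem_filter, Finset.HasAntidiagonal.mem_antidiagonal, Finset.mem_singleton, not_lt,
      Prod.ext_iff]
    omega
  have hpart2 : ∑ a ∈ Finset.filter (fun a : ℕ × ℕ => ¬ a.1 < n) (Finset.HasAntidiagonal.antidiagonal n),
      MvPolynomial.esymm (Fin N) ℚ a.1 * cC N a.2 = MvPolynomial.esymm (Fin N) ℚ n := by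
    rw [hsingle, Finset.sum_singleton]
    simp [cC]
  have hterm : ∀ a ∈ Finset.filter (fun a : ℕ × ℕ => a.1 < n) (Finset.HasAntidiagonal.antidiagonal n),
      MvPolynomial.esymm (Fin N) ℚ a.1 * cC N a.2
      = (-1 : MvPolynomial (Fin N) ℚ)^n *
          ((-1)^a.1 * MvPolynomial.esymm (Fin N) ℚ a.1 * MvPolynomial.psum (Fin N) ℚ a.2) := by
    intro a ha
    simp only [Finset.mem_filter, Finset.HasAntidiagonal.mem_antidiagonal] at ha
    have ha2 : a.2 ≠ 0 := by omega
    have key : ((-1 : MvPolynomial (Fin N) ℚ))^n * (-1)^(a.1) = (-1)^(a.2) := by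
      rw [← pow_add, show n + a.1 = 2*a.1 + a.2 by omega, pow_add, pow_mul]
      norm_num
    rw [cC, if_neg ha2, ← mul_assoc, mul_comm ((-1 : MvPolynomial (Fin N) ℚ)^n) _,
      mul_assoc, mul_assoc, ← key]
    ring
  rw [Finset.sum_congr rfl hterm, ← Finset.mul_sum, hpart2]
  have hN := MvPolynomial.mul_esymm_eq_sum (Fin N) ℚ n
  have h4 : ((-1 : MvPolynomial (Fin N) ℚ)^(n+1)) * ((-1 : MvPolynomial (Fin N) ℚ)^(n+1)) = 1 := by
    rw [← pow_add]
    exact Even.neg_one_pow ⟨n+1, rfl⟩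
  have h3 : ((-1 : MvPolynomial (Fin N) ℚ)^n) * ((-1 : MvPolynomial (Fin N) ℚ)^(n+1)) = -1 := by
    rw [← pow_add, show n + (n+1) = 2*n + 1 by omega, pow_add, pow_mul]
    norm_num
  have hS : (∑ a ∈ Finset.filter (fun a : ℕ × ℕ => a.1 < n) (Finset.HasAntidiagonal.antidiagonal n),
        (-1 : MvPolynomial (Fin N) ℚ)^a.1 * MvPolynomial.esymm (Fin N) ℚ a.1
          * MvPolynomial.psum (Fin N) ℚ a.2)
      = (-1 : MvPolynomial (Fin N) ℚ)^(n+1)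
        * ((n : MvPolynomial (Fin N) ℚ) * MvPolynomial.esymm (Fin N) ℚ n) := by
    rw [hN, ← mul_assoc, h4, one_mul]
  rw [hS, ← mul_assoc, h3]
  ring

lemma star (N n : ℕ) :
    ∑ ab ∈ Finset.HasAntidiagonal.antidiagonal n, pV N ab.1 *
      (MvPolynomial.esymm (Fin N) ℚ ab.2
        - (ab.2 : MvPolynomial (Fin N) ℚ) * MvPolynomial.esymm (Fin N) ℚ ab.2)
    = MvPolynomial.esymm (Fin N) ℚ n := by
  classical
  set R := MvPolynomial (Fin N) ℚ
  let A : PowerSeries R := PowerSeries.mk (pV N)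
  let C : PowerSeries R := PowerSeries.mk (cC N)
  let B : PowerSeries R := PowerSeries.mk (fun k => MvPolynomial.esymm (Fin N) ℚ k)
  let D : PowerSeries R := PowerSeries.mk
    (fun k => MvPolynomial.esymm (Fin N) ℚ k - (k : R) * MvPolynomial.esymm (Fin N) ℚ k)
  have hAC : A * C = 1 := by
    ext m
    rw [PowerSeries.coeff_mul]
    simp only [PowerSeries.coeff_mk, A, C]
    rw [conv_pC, PowerSeries.coeff_one]
  have hBC : B * C = D := by
    ext m
    rw [PowerSeries.coeff_mul]
    simp only [PowerSeries.coeff_mk, B, C, D]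
    rw [conv_eC]
  have hAD : A * D = B := by
    calc A * D = (A * C) * B := by rw [← hBC]; ring
    _ = B := by rw [hAC, one_mul]
  have hco := congrArg (PowerSeries.coeff n) hAD
  rw [PowerSeries.coeff_mul] at hco
  simpa only [PowerSeries.coeff_mk, A, B, D] using hco
lemma smul_bridge {N : ℕ} (m : ℕ) (y : MvPolynomial (Fin N) ℚ) :
    (((m : ℚ)) - 1) • y = (((m : ℕ) : MvPolynomial (Fin N) ℚ) - 1) * y := by
  rw [sub_smul, one_smul, Nat.cast_smul_eq_nsmul, nsmul_eq_mul, sub_mul, one_mul]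

lemma eProd_cons {N : ℕ} (a : ℕ) (s : Multiset ℕ) :
    (eProd (a ::ₘ s) : MvPolynomial (Fin N) ℚ)
      = MvPolynomial.esymm (Fin N) ℚ a * eProd s := by
  rw [eProd, Multiset.map_cons, Multiset.prod_cons, eProd]

/-- Insert a part of size `n+1-k` into a partition of `k`. -/
def extP {n : ℕ} (k : ℕ) (hk : k < n + 1) (μ : Nat.Partition k) : Nat.Partition (n + 1) where
  parts := (n + 1 - k) ::ₘ μ.parts
  parts_pos := by
    intro i hi
    rcases Multiset.mem_cons.mp hi with rfl | h
    · omega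
    · exact μ.parts_pos h
  parts_sum := by rw [Multiset.sum_cons, μ.parts_sum]; omega

lemma master : ∀ n : ℕ, ∃ c : Nat.Partition n → ℚ, (∀ p, 0 ≤ c p) ∧
    ∀ N, pV N n = ∑ p : Nat.Partition n, c p • eProd p.parts := by
  intro n
  induction n using Nat.strong_induction_on with
  | _ n ih =>
  rcases n with _ | n
  · refine ⟨fun _ => 1, fun _ => zero_le_one, fun N => ?_⟩
    rw [Finset.univ_unique, Finset.sum_singleton]
    simp [pV, eProd]
  · choose cf hpos heq using fun m (hm : m < n + 1) => ih m hm
    set A := (Finset.range (n+1)).attach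
    have hmem : ∀ k : {x // x ∈ Finset.range (n+1)}, (k : ℕ) < n + 1 :=
      fun k => Finset.mem_range.mp k.2
    refine ⟨fun lam =>
      (if lam = Nat.Partition.indiscrete (n+1) then 1 else 0) +
      ∑ k ∈ A, ∑ μ : Nat.Partition (k : ℕ),
        if extP (k : ℕ) (hmem k) μ = lam
          then (((n + 1 - (k : ℕ) : ℕ) : ℚ) - 1) * cf (k : ℕ) (hmem k) μ else 0,
      ?_, ?_⟩
    · intro lam
      have h1 : (0:ℚ) ≤ if lam = Nat.Partition.indiscrete (n+1) then 1 else 0 := by positivity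
      refine add_nonneg h1 (Finset.sum_nonneg fun k _ => Finset.sum_nonneg fun μ _ => ?_)
      have hw : (0:ℚ) ≤ (((n + 1 - (k : ℕ) : ℕ) : ℚ) - 1) := by
        have := hmem k
        have h2 : (1:ℕ) ≤ n + 1 - (k : ℕ) := by omega
        have h3 : (1:ℚ) ≤ ((n + 1 - (k : ℕ) : ℕ) : ℚ) := by exact_mod_cast h2
        linarith
      have := hpos (k : ℕ) (hmem k) μ
      split
      · positivity
      · exact le_refl 0
    · intro N
      set w : {x // x ∈ Finset.range (n+1)} → ℚ :=
        fun k => (((n + 1 - (k : ℕ) : ℕ) : ℚ) - 1) with hw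
      -- RHS expansion
      rw [Finset.sum_congr rfl (fun lam _ => add_smul _ _ _), Finset.sum_add_distrib]
      have hpart1 : ∑ lam : Nat.Partition (n+1),
          (if lam = Nat.Partition.indiscrete (n+1) then (1:ℚ) else 0) • eProd lam.parts
          = MvPolynomial.esymm (Fin N) ℚ (n+1) := by
        rw [Finset.sum_congr rfl (fun lam _ => ite_smul _ _ _ _)]
        simp only [one_smul, zero_smul]
        rw [Finset.sum_ite_eq' Finset.univ (Nat.Partition.indiscrete (n+1))]
        simp only [Finset.mem_univ, if_true]
        rw [Nat.Partition.indiscrete_parts (Nat.succ_ne_zero n)]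
        show eProd ((n+1) ::ₘ 0) = _
        rw [eProd_cons]
        simp [eProd]
      have hpart2 : ∑ lam : Nat.Partition (n+1),
          (∑ k ∈ A, ∑ μ : Nat.Partition (k : ℕ),
            if extP (k : ℕ) (hmem k) μ = lam then w k * cf (k : ℕ) (hmem k) μ else 0)
            • (eProd lam.parts : MvPolynomial (Fin N) ℚ)
          = ∑ k ∈ A, ∑ μ : Nat.Partition (k : ℕ),
              (w k * cf (k : ℕ) (hmem k) μ) • eProd (extP (k : ℕ) (hmem k) μ).parts := by
        rw [Finset.sum_congr rfl (fun lam _ => Finset.sum_smul)]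
        rw [Finset.sum_comm]
        refine Finset.sum_congr rfl fun k _ => ?_
        rw [Finset.sum_congr rfl (fun lam _ => Finset.sum_smul), Finset.sum_comm]
        refine Finset.sum_congr rfl fun μ _ => ?_
        rw [Finset.sum_congr rfl (fun lam _ => ite_smul _ _ _ _)]
        simp only [zero_smul]
        rw [Finset.sum_ite_eq Finset.univ (extP (k : ℕ) (hmem k) μ)]
        simp only [Finset.mem_univ, if_true]
      rw [hpart1, hpart2]
      -- per-k evaluation
      have hterm : ∀ k ∈ A, (∑ μ : Nat.Partition (k : ℕ),
            (w k * cf (k : ℕ) (hmem k) μ) • (eProd (extP (k : ℕ) (hmem k) μ).parts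
              : MvPolynomial (Fin N) ℚ))
          = -(pV N (k : ℕ) * (MvPolynomial.esymm (Fin N) ℚ (n + 1 - (k : ℕ))
              - ((n + 1 - (k : ℕ) : ℕ) : MvPolynomial (Fin N) ℚ)
                * MvPolynomial.esymm (Fin N) ℚ (n + 1 - (k : ℕ)))) := by
        intro k _
        have hstep : ∀ μ : Nat.Partition (k : ℕ),
            (w k * cf (k : ℕ) (hmem k) μ) • (eProd (extP (k : ℕ) (hmem k) μ).parts
              : MvPolynomial (Fin N) ℚ)
            = (((n + 1 - (k : ℕ) : ℕ) : MvPolynomial (Fin N) ℚ) - 1)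
              * (MvPolynomial.esymm (Fin N) ℚ (n + 1 - (k : ℕ))
                * (cf (k : ℕ) (hmem k) μ • eProd μ.parts)) := by
          intro μ
          have hparts : (extP (k : ℕ) (hmem k) μ).parts = (n + 1 - (k : ℕ)) ::ₘ μ.parts := rfl
          rw [hparts, eProd_cons, mul_smul, hw, smul_bridge]
          simp [mul_smul_comm]
        rw [Finset.sum_congr rfl (fun μ _ => hstep μ), ← Finset.mul_sum, ← Finset.mul_sum,
          ← heq (k : ℕ) (hmem k) N]
        ring
      rw [Finset.sum_congr rfl hterm]
      -- use the star identity
      have hstar := star N (n+1)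
      rw [Finset.Nat.sum_antidiagonal_eq_sum_range_succ_mk, Finset.sum_range_succ] at hstar
      have hlast : pV N (n+1) * (MvPolynomial.esymm (Fin N) ℚ (n + 1 - (n+1))
          - ((n + 1 - (n+1) : ℕ) : MvPolynomial (Fin N) ℚ)
            * MvPolynomial.esymm (Fin N) ℚ (n + 1 - (n+1))) = pV N (n+1) := by
        rw [Nat.sub_self]
        simp [MvPolynomial.esymm_zero]
      rw [hlast] at hstar
      rw [show (∑ k ∈ A, -(pV N (k : ℕ) * (MvPolynomial.esymm (Fin N) ℚ (n + 1 - (k : ℕ))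
            - ((n + 1 - (k : ℕ) : ℕ) : MvPolynomial (Fin N) ℚ)
              * MvPolynomial.esymm (Fin N) ℚ (n + 1 - (k : ℕ)))))
          = ∑ k ∈ Finset.range (n+1), -(pV N k * (MvPolynomial.esymm (Fin N) ℚ (n + 1 - k)
            - ((n + 1 - k : ℕ) : MvPolynomial (Fin N) ℚ)
              * MvPolynomial.esymm (Fin N) ℚ (n + 1 - k)))
        from Finset.sum_attach (Finset.range (n+1))
          (fun k => -(pV N k * (MvPolynomial.esymm (Fin N) ℚ (n + 1 - k)
            - ((n + 1 - k : ℕ) : MvPolynomial (Fin N) ℚ)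
              * MvPolynomial.esymm (Fin N) ℚ (n + 1 - k))))]
      rw [Finset.sum_neg_distrib]
      linear_combination hstar

end PathProof

/-- The chromatic symmetric function of a path is `e`-positive. -/
theorem path_X_ePositive (d : ℕ) :
    ∃ c : Nat.Partition (d + 1) → ℚ, (∀ p, 0 ≤ c p) ∧
      ∀ N : ℕ, Xcomm (pathEnds d) N =
        ∑ p : Nat.Partition (d + 1), c p • eProd p.parts := by
  obtain ⟨c, h1, h2⟩ := master (d + 1)
  exact ⟨c, h1, fun N => by rw [← h2 N]; rfl⟩
end

section
/- The noncommutative chromatic symmetric function distinguishes simple graphs: if G and H are graphs with no loops or multiple edges on the labeled vertex set {v_1,...,v_d} and Y_G = Y_H, then G = H. -/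
open Finset

attribute [local instance] Classical.propDecidable

lemma adj_iff_Y {d : ℕ} (G : SimpleGraph (Fin d)) (i j : Fin d) :
    G.Adj i j ↔ Y (fun e : G.edgeSet => (e : Sym2 (Fin d)))
      (fun k => if k = j then (i : ℕ) else k) = 0 := by
  set w : Fin d → ℕ := fun k => if k = j then (i : ℕ) else k with hw
  constructor
  · intro hadj
    have hij : i ≠ j := G.ne_of_adj hadj
    have hnp : ¬ Proper (fun e : G.edgeSet => (e : Sym2 (Fin d))) w := by
      intro hp
      have := hp ⟨s(i, j), hadj⟩ i j rfl
      apply this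
      simp [hw, hij]
    simp [Y, hnp]
  · intro h0
    by_contra hadj
    have hp : Proper (fun e : G.edgeSet => (e : Sym2 (Fin d))) w := by
      rintro ⟨e, he⟩ a b hab heq
      simp only at hab
      subst hab
      have hadj' : G.Adj a b := (G.mem_edgeSet).mp he
      have hne : a ≠ b := G.ne_of_adj hadj'
      by_cases ha : a = j <;> by_cases hb : b = j
      · exact hne (ha.trans hb.symm)
      · subst ha
        simp only [hw, if_pos rfl, if_neg hb] at heq
        have : b = i := Fin.ext heq.symm
        subst this
        exact hadj hadj'.symm
      · subst hb
        simp only [hw, if_neg ha, if_pos rfl] at heq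
        have : a = i := Fin.ext heq
        subst this
        exact hadj hadj'
      · simp only [hw, if_neg ha, if_neg hb] at heq
        exact hne (Fin.ext heq)
    rw [Y] at h0
    simp [hp] at h0

/-- `Y` distinguishes simple graphs: if `Y_G = Y_H` for two graphs with no
loops or multiple edges on the same labeled vertex set, then `G = H`. -/
theorem Y_injective_on_simpleGraphs {d : ℕ} (G H : SimpleGraph (Fin d))
    (h : Y (fun e : G.edgeSet => (e : Sym2 (Fin d))) =
         Y (fun e : H.edgeSet => (e : Sym2 (Fin d)))) :
    G = H := by
  ext i j
  rw [adj_iff_Y, adj_iff_Y, h]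
end
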